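/- Let G be a connected leafless graph of Betti number 2. Then #Aut(G) ≤ 12. -/

import Mathlib

/-- A finite undirected multigraph (allowing loops and multiple edges) on a vertex type `V`
and an edge type `E`: the map `ends` assigns to each edge its unordered pair of endpoints
(a loop is an edge whose two endpoints coincide).  This is the same data as an incidence
map `ε : E → 2^V` taking values in subsets of cardinality 1 or 2. -/
structure Multigraph (V E : Type) where
  ends : E → Sym2 V

namespace Multigraph

variable {V E : Type} (G : Multigraph V E)

/-- An automorphism of a multigraph: a pair of bijections on vertices and edges
commuting with the incidence map. -/
structure Aut (G : Multigraph V E) where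
  toV : Equiv.Perm V
  toE : Equiv.Perm E
  ends_map : ∀ e, G.ends (toE e) = Sym2.map toV (G.ends e)

/-- Degree of the vertex `v` with respect to the edge set `F` (loops counted twice):
the number of edges of `F` incident to `v`, plus the number of loops of `F` at `v`. -/
noncomputable def degIn (F : Set E) (v : V) : ℕ :=
  {e ∈ F | v ∈ G.ends e}.ncard + {e ∈ F | G.ends e = s(v, v)}.ncard

/-- Degree of a vertex (loops counted twice). -/
noncomputable def degree (v : V) : ℕ := G.degIn Set.univ v

/-- A graph is leafless if every vertex has degree at least two. -/
def Leafless : Prop := ∀ v, 2 ≤ G.degree v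

/-- Adjacency: there is an edge with endpoints `u`, `v`. -/
def Adj (u v : V) : Prop := ∃ e, G.ends e = s(u, v)

/-- A graph is connected if it is nonempty and every two vertices are joined by a walk. -/
def Connected : Prop := Nonempty V ∧ ∀ u v : V, Relation.ReflTransGen G.Adj u v

/-- Adjacency using only edges outside the edge set `F`. -/
def AdjOff (F : Set E) (u v : V) : Prop := ∃ e, e ∉ F ∧ G.ends e = s(u, v)

/-- Adjacency in the subgraph `G ∖ {x}` obtained by deleting the vertex `x`
and all edges incident to it. -/
def AdjOffV (x : V) (u v : V) : Prop := u ≠ x ∧ v ≠ x ∧ G.Adj u v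

/-- An edge is a bridge if its endpoints are not joined by a walk avoiding it;
equivalently, its deletion increases the number of connected components. -/
def IsBridge (e : E) : Prop :=
  ∃ u v, G.ends e = s(u, v) ∧ ¬ Relation.ReflTransGen (G.AdjOff {e}) u v

end Multigraph

set_option linter.unusedSectionVars false
set_option linter.unusedVariables false
set_option maxHeartbeats 1000000

namespace Multigraph

open Finset Relation

attribute [local instance] Classical.propDecidable

variable {V E : Type}

private lemma sym2_exists (z : Sym2 V) : ∃ p q, z = s(p, q) :=
  Sym2.inductionOn z (fun p q => ⟨p, q, rfl⟩)

section Basic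

variable {G : Multigraph V E}

/-- membership transport under automorphism -/
lemma Aut.mem_ends (f : G.Aut) {v : V} {e : E} (h : v ∈ G.ends e) :
    f.toV v ∈ G.ends (f.toE e) := by
  rw [f.ends_map]
  exact Sym2.mem_map.2 ⟨v, h, rfl⟩

lemma Aut.mem_ends_iff (f : G.Aut) {v : V} {e : E} :
    f.toV v ∈ G.ends (f.toE e) ↔ v ∈ G.ends e := by
  constructor
  · intro h
    rw [f.ends_map] at h
    obtain ⟨u, hu, huv⟩ := Sym2.mem_map.1 h
    rwa [f.toV.injective huv] at hu
  · exact f.mem_ends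

lemma Aut.loop_map (f : G.Aut) {v : V} {e : E} (h : G.ends e = s(v, v)) :
    G.ends (f.toE e) = s(f.toV v, f.toV v) := by
  rw [f.ends_map, h, Sym2.map_pair_eq]

lemma Aut.loop_map_iff (f : G.Aut) {v : V} {e : E} :
    G.ends (f.toE e) = s(f.toV v, f.toV v) ↔ G.ends e = s(v, v) := by
  refine ⟨fun h => ?_, f.loop_map⟩
  obtain ⟨p, q, hpq⟩ := sym2_exists (G.ends e)
  rw [f.ends_map, hpq, Sym2.map_pair_eq, Sym2.eq_iff] at h
  rw [hpq]
  rcases h with ⟨h1, h2⟩ | ⟨h1, h2⟩ <;>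
    rw [f.toV.injective h1, f.toV.injective h2]

end Basic

section Fin

variable [Fintype V] [Fintype E] (G : Multigraph V E)

private lemma ncard_setOf (P : E → Prop) [DecidablePred P] :
    {e | P e}.ncard = (univ.filter P).card := by
  rw [← Set.ncard_coe_finset]
  congr 1
  ext x
  simp

/-- edges incident to `v` -/
noncomputable def Ie (v : V) : Finset E := univ.filter (fun e => v ∈ G.ends e)

/-- loops at `v` -/
noncomputable def Le (v : V) : Finset E := univ.filter (fun e => G.ends e = s(v, v))

lemma degree_eq (v : V) :
    G.degree v = (G.Ie v).card + (G.Le v).card := by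
  unfold degree degIn Ie Le
  rw [Set.sep_univ, Set.sep_univ, ncard_setOf, ncard_setOf]

/-- handshake core -/
lemma hs (S : Finset E) :
    2 * S.card = ∑ v : V, ((S ∩ G.Ie v).card + (S ∩ G.Le v).card) := by
  have hfil1 : ∀ v : V, S ∩ G.Ie v = S.filter (fun e => v ∈ G.ends e) := by
    intro v; ext x; simp [Ie, Finset.mem_filter, Finset.mem_inter]
  have hfil2 : ∀ v : V, S ∩ G.Le v = S.filter (fun e => G.ends e = s(v, v)) := by
    intro v; ext x; simp [Le, Finset.mem_filter, Finset.mem_inter]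
  have per_edge : ∀ e : E,
      (∑ v : V, ((if v ∈ G.ends e then 1 else 0) + (if G.ends e = s(v, v) then 1 else 0))) = 2 := by
    intro e
    obtain ⟨p, q, hpq⟩ := sym2_exists (G.ends e)
    rw [hpq]
    by_cases hpq' : p = q
    · subst hpq'
      have h1 : ∀ v : V, ((if v ∈ s(p, p) then 1 else 0) + (if s(p,p) = s(v, v) then 1 else 0))
          = ((if v = p then 1 else 0) + (if v = p then 1 else 0)) := by
        intro v
        congr 1
        · simp [Sym2.mem_iff]
        · simp [Sym2.eq_iff, eq_comm]
      rw [Finset.sum_congr rfl (fun v _ => h1 v), Finset.sum_add_distrib]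
      simp [Finset.sum_ite_eq' Finset.univ p]
    · have h1 : ∀ v : V, ((if v ∈ s(p, q) then 1 else 0) + (if s(p,q) = s(v, v) then 1 else 0))
          = ((if v = p then 1 else 0) + (if v = q then 1 else 0)) := by
        intro v
        have h2 : ¬ (s(p,q) = s(v,v)) := by
          rw [Sym2.eq_iff]
          rintro (⟨h3, h4⟩ | ⟨h3, h4⟩) <;> exact hpq' (h3.trans h4.symm)
        simp only [Sym2.mem_iff, if_neg h2]
        by_cases hp : v = p <;> by_cases hq : v = q
        · exact absurd (hp.symm.trans hq) hpq'
        · simpa [hp, hq] using hpq'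
        · simpa [hp, hq] using (fun h => hpq' h.symm)
        · simp [hp, hq]
      rw [Finset.sum_congr rfl (fun v _ => h1 v), Finset.sum_add_distrib]
      simp [Finset.sum_ite_eq' Finset.univ]
  calc 2 * S.card = ∑ e ∈ S, 2 := by rw [Finset.sum_const, smul_eq_mul, mul_comm]
    _ = ∑ e ∈ S, ∑ v : V, ((if v ∈ G.ends e then 1 else 0) + (if G.ends e = s(v, v) then 1 else 0)) := by
        exact Finset.sum_congr rfl (fun e _ => (per_edge e).symm)
    _ = ∑ v : V, ∑ e ∈ S, ((if v ∈ G.ends e then 1 else 0) + (if G.ends e = s(v, v) then 1 else 0)) :=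
        Finset.sum_comm
    _ = _ := by
        refine Finset.sum_congr rfl (fun v _ => ?_)
        rw [Finset.sum_add_distrib, hfil1, hfil2, Finset.card_filter, Finset.card_filter]

lemma sum_degree : ∑ v : V, G.degree v = 2 * Fintype.card E := by
  calc ∑ v : V, G.degree v
      = ∑ v : V, ((G.Ie v).card + (G.Le v).card) :=
        Finset.sum_congr rfl (fun v _ => G.degree_eq v)
    _ = ∑ v : V, ((univ ∩ G.Ie v).card + (univ ∩ G.Le v).card) := by
        simp [Finset.univ_inter]
    _ = 2 * (Finset.univ : Finset E).card := (hs G Finset.univ).symm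
    _ = 2 * Fintype.card E := by rw [Finset.card_univ]

lemma Aut.Ie_image {G : Multigraph V E} (f : G.Aut) (v : V) :
    (G.Ie v).image f.toE = G.Ie (f.toV v) := by
  ext x
  simp only [Ie, Finset.mem_image, Finset.mem_filter, Finset.mem_univ, true_and]
  constructor
  · rintro ⟨y, hy, rfl⟩; exact f.mem_ends hy
  · intro hx
    refine ⟨f.toE.symm x, ?_, f.toE.apply_symm_apply x⟩
    have h := f.mem_ends_iff (v := v) (e := f.toE.symm x)
    rw [f.toE.apply_symm_apply] at h
    exact h.1 hx

lemma Aut.Le_image {G : Multigraph V E} (f : G.Aut) (v : V) :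
    (G.Le v).image f.toE = G.Le (f.toV v) := by
  ext x
  simp only [Le, Finset.mem_image, Finset.mem_filter, Finset.mem_univ, true_and]
  constructor
  · rintro ⟨y, hy, rfl⟩; exact f.loop_map hy
  · intro hx
    refine ⟨f.toE.symm x, ?_, f.toE.apply_symm_apply x⟩
    have h := f.loop_map_iff (v := v) (e := f.toE.symm x)
    rw [f.toE.apply_symm_apply] at h
    exact h.1 hx

lemma Aut.degree_map {G : Multigraph V E} (f : G.Aut) (v : V) :
    G.degree (f.toV v) = G.degree v := by
  rw [degree_eq, degree_eq, ← Aut.Ie_image f v, ← Aut.Le_image f v,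
    Finset.card_image_of_injective _ f.toE.injective,
    Finset.card_image_of_injective _ f.toE.injective]

lemma Aut.branch_map {G : Multigraph V E} (f : G.Aut) {v : V} (h : 3 ≤ G.degree v) :
    3 ≤ G.degree (f.toV v) := by rw [f.degree_map]; exact h

private lemma sum_eq_two_split {α : Type} [Fintype α] (g : α → ℕ) (h : ∑ v, g v = 2) :
    (∃ w, g w = 2 ∧ ∀ u, u ≠ w → g u = 0) ∨
    (∃ w u, w ≠ u ∧ g w = 1 ∧ g u = 1 ∧ ∀ z, z ≠ w → z ≠ u → g z = 0) := by
  set T := univ.filter (fun v => g v ≠ 0) with hT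
  have hsum : ∑ v ∈ T, g v = 2 := by rw [hT, Finset.sum_filter_ne_zero]; exact h
  have hzero : ∀ z, z ∉ T → g z = 0 := by
    intro z hz; by_contra h0; exact hz (by simp [hT, h0])
  have hmemT : ∀ z, z ∈ T → g z ≠ 0 := fun z hz => (Finset.mem_filter.1 hz).2
  have hcard : T.card ≤ 2 := by
    calc T.card = ∑ _v ∈ T, 1 := by simp
    _ ≤ ∑ v ∈ T, g v := Finset.sum_le_sum (fun v hv => by have := hmemT v hv; omega)
    _ = 2 := hsum
  by_cases h0 : T.card = 0
  · rw [Finset.card_eq_zero] at h0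
    rw [h0, Finset.sum_empty] at hsum; omega
  by_cases h1 : T.card = 1
  · obtain ⟨w, hw⟩ := Finset.card_eq_one.1 h1
    rw [hw, Finset.sum_singleton] at hsum
    exact Or.inl ⟨w, hsum, fun u hu => hzero u (by rw [hw]; simp [hu])⟩
  · have h2 : T.card = 2 := by omega
    obtain ⟨w, u, hwu, hT2⟩ := Finset.card_eq_two.1 h2
    rw [hT2, Finset.sum_pair hwu] at hsum
    have hgw : g w ≠ 0 := hmemT w (by rw [hT2]; simp)
    have hgu : g u ≠ 0 := hmemT u (by rw [hT2]; simp)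
    exact Or.inr ⟨w, u, hwu, by omega, by omega,
      fun z hzw hzu => hzero z (by rw [hT2]; simp [hzw, hzu])⟩

lemma branch_split (G : Multigraph V E) (hleaf : G.Leafless)
    (hbetti : Fintype.card E + 1 = Fintype.card V + 2) :
    (∃ w, G.degree w = 4 ∧ ∀ v, 3 ≤ G.degree v → v = w) ∨
    (∃ a b, a ≠ b ∧ G.degree a = 3 ∧ G.degree b = 3 ∧
      (∀ v, 3 ≤ G.degree v → v = a ∨ v = b)) := by
  have h1 : ∑ v : V, G.degree v = 2 * Fintype.card V + 2 := by
    rw [sum_degree]; omega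
  have h2 : ∑ v : V, (G.degree v - 2) = 2 := by
    have hd : ∀ v : V, G.degree v = (G.degree v - 2) + 2 := fun v => by
      have := hleaf v; omega
    rw [Finset.sum_congr rfl (fun v _ => hd v), Finset.sum_add_distrib,
      Finset.sum_const, Finset.card_univ, smul_eq_mul] at h1
    omega
  rcases sum_eq_two_split _ h2 with ⟨w, hw2, hrest⟩ | ⟨a, b, hab, ha1, hb1, hrest⟩
  · refine Or.inl ⟨w, by have := hleaf w; omega, fun v hv => ?_⟩
    by_contra hne; have := hrest v hne; omega
  · refine Or.inr ⟨a, b, hab, by have := hleaf a; omega, by have := hleaf b; omega,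
      fun v hv => ?_⟩
    by_contra hne; push_neg at hne; have := hrest v hne.1 hne.2; omega

lemma Aut.ext_of {G : Multigraph V E} {f g : G.Aut} (hV : ∀ v, f.toV v = g.toV v)
    (hE : ∀ e, f.toE e = g.toE e) : f = g := by
  obtain ⟨fV, fE, hf⟩ := f; obtain ⟨gV, gE, hg⟩ := g
  simp only [Aut.mk.injEq]
  exact ⟨Equiv.ext hV, Equiv.ext hE⟩

lemma aut_eq_of_branch_agree {G : Multigraph V E} (hconn : G.Connected) (hleaf : G.Leafless)
    {b₀ : V} (hb₀ : 3 ≤ G.degree b₀) {f g : G.Aut}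
    (hV : ∀ v, 3 ≤ G.degree v → f.toV v = g.toV v)
    (hE : ∀ e v, 3 ≤ G.degree v → v ∈ G.ends e → f.toE e = g.toE e) :
    f = g := by
  set U : Set V := {v | f.toV v = g.toV v ∧ ∀ e, v ∈ G.ends e → f.toE e = g.toE e} with hU
  have hBU : ∀ v, 3 ≤ G.degree v → v ∈ U := fun v hv => ⟨hV v hv, fun e he => hE e v hv he⟩
  have hstep : ∀ v w, v ∈ U → G.Adj v w → w ∈ U := by
    rintro v w ⟨hvV, hvE⟩ ⟨e, he⟩
    have hve : v ∈ G.ends e := by rw [he]; exact Sym2.mem_mk_left _ _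
    have hwe : w ∈ G.ends e := by rw [he]; exact Sym2.mem_mk_right _ _
    have hee : f.toE e = g.toE e := hvE e hve
    have hwV : f.toV w = g.toV w := by
      have h1 : G.ends (f.toE e) = s(f.toV v, f.toV w) := by
        rw [f.ends_map, he, Sym2.map_pair_eq]
      have h2 : G.ends (g.toE e) = s(g.toV v, g.toV w) := by
        rw [g.ends_map, he, Sym2.map_pair_eq]
      rw [hee, h2, hvV, Sym2.eq_iff] at h1
      rcases h1 with ⟨-, h⟩ | ⟨h1', h2'⟩
      · exact h.symm
      · rw [← h1', h2']
    by_cases hwB : 3 ≤ G.degree w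
    · exact hBU w hwB
    refine ⟨hwV, fun e' he' => ?_⟩
    have hdeg : (G.Ie w).card + (G.Le w).card = 2 := by
      rw [← degree_eq]
      have h3 := hleaf w; omega
    by_cases hL : (G.Le w).card = 0
    · have hI2 : (G.Ie w).card = 2 := by omega
      have key : ∀ z, w ∈ G.ends z → f.toE z = g.toE z := by
        intro z hz
        by_cases hze : z = e
        · rw [hze]; exact hee
        · have hzI : z ∈ G.Ie w := by simp [Ie, hz]
          have heI : e ∈ G.Ie w := by simp [Ie, hwe]
          have hpair : ({e, z} : Finset E).card = 2 := by
            rw [Finset.card_insert_of_notMem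
              (by simp only [Finset.mem_singleton]; exact fun h => hze h.symm),
              Finset.card_singleton]
          have hset : ({e, z} : Finset E) = G.Ie w :=
            Finset.eq_of_subset_of_card_le
              (by intro t ht; rcases Finset.mem_insert.1 ht with rfl | ht' <;>
                  [exact heI; (rw [Finset.mem_singleton.1 ht']; exact hzI)])
              (by omega)
          -- φ
          have hphi : ∀ y, y ∈ G.Ie w → g.toE.symm (f.toE y) ∈ G.Ie w := by
            intro y hy
            have hy' : w ∈ G.ends y := by simpa [Ie] using hy
            have hmem : f.toV w ∈ G.ends (f.toE y) := f.mem_ends hy'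
            rw [hwV] at hmem
            have h4 := g.mem_ends_iff (v := w) (e := g.toE.symm (f.toE y))
            rw [g.toE.apply_symm_apply] at h4
            have h5 := h4.1 hmem
            simp [Ie, h5]
          have hefix : g.toE.symm (f.toE e) = e := by rw [hee, g.toE.symm_apply_apply]
          have hzIm : g.toE.symm (f.toE z) ∈ ({e, z} : Finset E) := by
            rw [hset]; exact hphi z hzI
          rcases Finset.mem_insert.1 hzIm with heq | hzm
          · exfalso
            have : z = e := by
              have h6 : g.toE.symm (f.toE z) = g.toE.symm (f.toE e) := by rw [hefix, heq]
              exact f.toE.injective (g.toE.symm.injective h6)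
            exact hze this
          · have h7 := Finset.mem_singleton.1 hzm
            have : f.toE z = g.toE z := by
              have := congrArg g.toE h7
              rwa [g.toE.apply_symm_apply] at this
            exact this
      exact key e' he'
    · have hsub : G.Le w ⊆ G.Ie w := by
        intro z hz
        simp only [Le, Finset.mem_filter, Finset.mem_univ, true_and] at hz
        simp only [Ie, Finset.mem_filter, Finset.mem_univ, true_and]
        rw [hz]; exact Sym2.mem_mk_left _ _
      have hI1 : (G.Ie w).card = 1 := by
        have := Finset.card_le_card hsub; omega
      obtain ⟨z₀, hz₀⟩ := Finset.card_eq_one.1 hI1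
      have he0 : e = z₀ := by
        have h8 : e ∈ G.Ie w := by simp [Ie, hwe]
        simpa [hz₀] using h8
      have he'0 : e' = z₀ := by
        have h9 : e' ∈ G.Ie w := by simp [Ie, he']
        simpa [hz₀] using h9
      rw [he'0, ← he0]; exact hee
  have hallU : ∀ v, v ∈ U := by
    intro v
    have hcw := hconn.2 b₀ v
    induction hcw with
    | refl => exact hBU b₀ hb₀
    | tail hrt hadj ih => exact hstep _ _ ih hadj
  refine Aut.ext_of (fun v => (hallU v).1) (fun e => ?_)
  obtain ⟨p, q, hpq⟩ := sym2_exists (G.ends e)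
  exact (hallU p).2 e (by rw [hpq]; exact Sym2.mem_mk_left _ _)

/-- step relation through a non-branch vertex -/
def Rb (G : Multigraph V E) (e e' : E) : Prop :=
  ∃ v, ¬ 3 ≤ G.degree v ∧ v ∈ G.ends e ∧ v ∈ G.ends e'

/-- same chain (connected through non-branch vertices) -/
def Chain (G : Multigraph V E) : E → E → Prop := Relation.ReflTransGen G.Rb

lemma Rb.symm {G : Multigraph V E} {x y : E} (h : G.Rb x y) : G.Rb y x := by
  obtain ⟨v, h1, h2, h3⟩ := h; exact ⟨v, h1, h3, h2⟩

lemma Chain.refl {G : Multigraph V E} (x : E) : G.Chain x x := Relation.ReflTransGen.refl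

lemma Chain.symm {G : Multigraph V E} {x y : E} (h : G.Chain x y) : G.Chain y x :=
  (@Relation.ReflTransGen.stdSymm _ G.Rb ⟨fun _ _ hr => hr.symm⟩).symm _ _ h

lemma Chain.trans {G : Multigraph V E} {x y z : E} (h : G.Chain x y) (h' : G.Chain y z) :
    G.Chain x z := Relation.ReflTransGen.trans h h'

lemma Aut.chain_map {G : Multigraph V E} (f : G.Aut) {x y : E} (h : G.Chain x y) :
    G.Chain (f.toE x) (f.toE y) := by
  induction h with
  | refl => exact Chain.refl _
  | tail hrt hr ih =>
      obtain ⟨v, h1, h2, h3⟩ := hr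
      exact ih.tail ⟨f.toV v, by rw [f.degree_map]; exact h1, f.mem_ends h2, f.mem_ends h3⟩

/-- branch-incidence pairs of the chain class of `e₀` -/
noncomputable def Pf (G : Multigraph V E) (e₀ : E) : Finset (V × E) :=
  univ.filter (fun p => 3 ≤ G.degree p.1 ∧ G.Chain e₀ p.2 ∧ p.1 ∈ G.ends p.2)

/-- branch-loop pairs of the chain class of `e₀` -/
noncomputable def Lf (G : Multigraph V E) (e₀ : E) : Finset (V × E) :=
  univ.filter (fun p => 3 ≤ G.degree p.1 ∧ G.Chain e₀ p.2 ∧ G.ends p.2 = s(p.1, p.1))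

lemma Le_subset_Ie (G : Multigraph V E) (v : V) : G.Le v ⊆ G.Ie v := by
  intro z hz
  simp only [Le, Finset.mem_filter, Finset.mem_univ, true_and] at hz
  simp only [Ie, Finset.mem_filter, Finset.mem_univ, true_and]
  rw [hz]; exact Sym2.mem_mk_left _ _

/-- iterated step relation -/
def reach (G : Multigraph V E) (e₀ : E) : ℕ → E → Prop
  | 0 => fun x => x = e₀
  | n+1 => fun x => ∃ y, G.reach e₀ n y ∧ G.Rb y x

lemma chain_reach {G : Multigraph V E} {e₀ x : E} (h : G.Chain e₀ x) :
    ∃ n, G.reach e₀ n x := by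
  induction h with
  | refl => exact ⟨0, rfl⟩
  | tail hrt hr ih => obtain ⟨n, hn⟩ := ih; exact ⟨n + 1, _, hn, hr⟩

/-- The master structure lemma: each chain class has exactly two branch ends. -/
theorem pf_lf_card (G : Multigraph V E) (hconn : G.Connected) (hleaf : G.Leafless)
    {b₀ : V} (hb₀ : 3 ≤ G.degree b₀) (e₀ : E) :
    (G.Pf e₀).card + (G.Lf e₀).card = 2 := by
  set Cf : Finset E := univ.filter (fun x => G.Chain e₀ x) with hCf
  set intf : Finset V :=
    univ.filter (fun v => ¬ 3 ≤ G.degree v ∧ ∃ x, G.Chain e₀ x ∧ v ∈ G.ends x) with hintf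
  have he₀C : e₀ ∈ Cf := by simp [hCf, Chain.refl]
  -- M3 : some branch incidence exists
  have hM3 : 1 ≤ (G.Pf e₀).card := by
    rw [Finset.one_le_card]
    by_contra hQ
    simp only [Finset.not_nonempty_iff_eq_empty] at hQ
    have hQ' : ∀ v x, G.Chain e₀ x → v ∈ G.ends x → ¬ 3 ≤ G.degree v := by
      intro v x hc hm hb
      have : (v, x) ∈ G.Pf e₀ := by simp [Pf, hb, hc, hm]
      rw [hQ] at this; exact absurd this (Finset.notMem_empty _)
    obtain ⟨p, q, hpq⟩ := sym2_exists (G.ends e₀)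
    have hpe₀ : p ∈ G.ends e₀ := by rw [hpq]; exact Sym2.mem_mk_left _ _
    have hKstep : ∀ u u', (∀ x, u ∈ G.ends x → G.Chain e₀ x) → G.Adj u u' →
        (∀ x, u' ∈ G.ends x → G.Chain e₀ x) := by
      rintro u u' hu ⟨y, hy⟩
      have hyc : G.Chain e₀ y := hu y (by rw [hy]; exact Sym2.mem_mk_left _ _)
      have hu'y : u' ∈ G.ends y := by rw [hy]; exact Sym2.mem_mk_right _ _
      have hu'nb : ¬ 3 ≤ G.degree u' := hQ' u' y hyc hu'y
      intro x hx
      exact hyc.tail ⟨u', hu'nb, hu'y, hx⟩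
    have hwalk : ∀ u, Relation.ReflTransGen G.Adj p u →
        (∀ x, u ∈ G.ends x → G.Chain e₀ x) := by
      intro u hru
      induction hru with
      | refl =>
          intro x hx
          exact Relation.ReflTransGen.single
            ⟨p, hQ' p e₀ (Chain.refl _) hpe₀, hpe₀, hx⟩
      | tail hrt hadj ih => exact hKstep _ _ ih hadj
    have hIb : 1 ≤ (G.Ie b₀).card := by
      have h1 := Finset.card_le_card (G.Le_subset_Ie b₀)
      have h2 := G.degree_eq b₀
      omega
    obtain ⟨y, hy⟩ := Finset.card_pos.1 (by omega : 0 < (G.Ie b₀).card)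
    have hyb : b₀ ∈ G.ends y := by simpa [Ie] using hy
    exact hQ' b₀ y (hwalk b₀ (hconn.2 p b₀) y hyb) hyb hb₀
  -- M2 : class has at most (internal count + 1) edges
  have hM2 : Cf.card ≤ intf.card + 1 := by
    have hne : Nonempty V := ⟨b₀⟩
    set D : E → ℕ := fun x => if h : ∃ n, G.reach e₀ n x then Nat.find h else 0 with hD
    have hwit : ∀ x, x ∈ Cf → x ≠ e₀ →
        ∃ v, (¬ 3 ≤ G.degree v ∧ v ∈ G.ends x) ∧ ∃ y, v ∈ G.ends y ∧ D y < D x := by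
      intro x hx hnex
      have hc : G.Chain e₀ x := by simpa [hCf] using hx
      have hex : ∃ n, G.reach e₀ n x := chain_reach hc
      have hreach : G.reach e₀ (D x) x := by
        rw [hD]; simp only [dif_pos hex]; exact Nat.find_spec hex
      have hpos : D x ≠ 0 := by
        intro h0
        rw [h0] at hreach
        exact hnex hreach
      obtain ⟨m, hm⟩ : ∃ m, D x = m + 1 := ⟨D x - 1, by omega⟩
      rw [hm] at hreach
      obtain ⟨y, hym, v, hvnb, hvy, hvx⟩ := hreach
      have hyex : ∃ n, G.reach e₀ n y := ⟨m, hym⟩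
      have hDy : D y ≤ m := by rw [hD]; simp only [dif_pos hyex]; exact Nat.find_le hym
      exact ⟨v, ⟨hvnb, hvx⟩, y, hvy, by omega⟩
    set W : E → V := fun x =>
      if h : ∃ v, (¬ 3 ≤ G.degree v ∧ v ∈ G.ends x) ∧ ∃ y, v ∈ G.ends y ∧ D y < D x
      then Classical.choose h else b₀ with hW
    have hWspec : ∀ x, x ∈ Cf → x ≠ e₀ →
        (¬ 3 ≤ G.degree (W x) ∧ W x ∈ G.ends x) ∧ ∃ y, W x ∈ G.ends y ∧ D y < D x := by
      intro x hx hnex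
      have h := hwit x hx hnex
      rw [hW]; simp only [dif_pos h]
      exact Classical.choose_spec h
    have hmaps : ∀ x ∈ Cf.erase e₀, W x ∈ intf := by
      intro x hx
      obtain ⟨⟨h1, h2⟩, -⟩ := hWspec x (Finset.mem_of_mem_erase hx)
        (Finset.ne_of_mem_erase hx)
      have hc : G.Chain e₀ x := by simpa [hCf] using Finset.mem_of_mem_erase hx
      simp only [hintf, Finset.mem_filter, Finset.mem_univ, true_and]
      exact ⟨h1, x, hc, h2⟩
    have hinj : Set.InjOn W ↑(Cf.erase e₀) := by
      intro x hx x' hx' heq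
      by_contra hne'
      obtain ⟨⟨h1, h2⟩, y, hy, hDy⟩ := hWspec x
        (Finset.mem_of_mem_erase (Finset.mem_coe.1 hx))
        (Finset.ne_of_mem_erase (Finset.mem_coe.1 hx))
      obtain ⟨⟨h1', h2'⟩, y', hy', hDy'⟩ := hWspec x'
        (Finset.mem_of_mem_erase (Finset.mem_coe.1 hx'))
        (Finset.ne_of_mem_erase (Finset.mem_coe.1 hx'))
      rw [heq] at h2 hy h1
      set v := W x' with hv
      -- edges at v are exactly {x, x'}
      have hdeg2 : (G.Ie v).card + (G.Le v).card = 2 := by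
        rw [← G.degree_eq]
        have := hleaf v; omega
      have hxI : x ∈ G.Ie v := by simp [Ie, h2]
      have hx'I : x' ∈ G.Ie v := by simp [Ie, h2']
      have hpair : ({x, x'} : Finset E).card = 2 := by
        rw [Finset.card_insert_of_notMem
          (by simp only [Finset.mem_singleton]; exact hne'), Finset.card_singleton]
      have hset : ({x, x'} : Finset E) = G.Ie v := by
        apply Finset.eq_of_subset_of_card_le
        · intro t ht
          rcases Finset.mem_insert.1 ht with rfl | ht'
          · exact hxI
          · rw [Finset.mem_singleton.1 ht']; exact hx'I
        · omega
      have hyv : y ∈ G.Ie v := by simp [Ie, hy]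
      have hy'v : y' ∈ G.Ie v := by simp [Ie, hy']
      rw [← hset] at hyv hy'v
      rcases Finset.mem_insert.1 hyv with rfl | hy1
      · omega
      · rw [Finset.mem_singleton.1 hy1] at hDy
        rcases Finset.mem_insert.1 hy'v with rfl | hy2
        · omega
        · rw [Finset.mem_singleton.1 hy2] at hDy'
          omega
    have := Finset.card_le_card_of_injOn W hmaps hinj
    have hcE := Finset.card_erase_add_one he₀C
    omega
  -- M1 : handshake within the class
  have hM1 : 2 * Cf.card = 2 * intf.card + (G.Pf e₀).card + (G.Lf e₀).card := by
    have hclosure : ∀ v, ¬ 3 ≤ G.degree v → (∃ x, G.Chain e₀ x ∧ v ∈ G.ends x) →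
        ∀ y, v ∈ G.ends y → G.Chain e₀ y := by
      rintro v hnb ⟨x, hxc, hxv⟩ y hyv
      exact hxc.tail ⟨v, hnb, hxv, hyv⟩
    have hP : ∑ v ∈ univ.filter (fun v => 3 ≤ G.degree v), (Cf ∩ G.Ie v).card
        = (G.Pf e₀).card := by
      rw [Finset.card_eq_sum_card_fiberwise
        (f := Prod.fst) (t := univ.filter (fun v => 3 ≤ G.degree v))
        (fun p hp => by
          simp only [Pf, Finset.mem_coe, Finset.mem_filter, Finset.mem_univ, true_and] at hp
          simp [hp.1])]
      refine Finset.sum_congr rfl (fun v hv => ?_)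
      simp only [Finset.mem_filter, Finset.mem_univ, true_and] at hv
      refine Finset.card_bij (fun x _ => ((v, x) : V × E)) ?_ ?_ ?_
      · intro x hx
        simp only [Finset.mem_inter, hCf, Ie, Finset.mem_filter, Finset.mem_univ,
          true_and] at hx
        simp [Finset.mem_filter, Pf, hv, hx.1, hx.2]
      · intro x1 _ x2 _ h12
        simpa using congrArg Prod.snd h12
      · rintro ⟨pv, px⟩ hp
        simp only [Finset.mem_filter, Pf, Finset.mem_univ, true_and] at hp
        obtain ⟨⟨hb, hc, hm⟩, hfst⟩ := hp
        subst hfst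
        refine ⟨px, ?_, rfl⟩
        simp only [Finset.mem_inter, hCf, Ie, Finset.mem_filter, Finset.mem_univ, true_and]
        exact ⟨hc, hm⟩
    have hL : ∑ v ∈ univ.filter (fun v => 3 ≤ G.degree v), (Cf ∩ G.Le v).card
        = (G.Lf e₀).card := by
      rw [Finset.card_eq_sum_card_fiberwise
        (f := Prod.fst) (t := univ.filter (fun v => 3 ≤ G.degree v))
        (fun p hp => by
          simp only [Lf, Finset.mem_coe, Finset.mem_filter, Finset.mem_univ, true_and] at hp
          simp [hp.1])]
      refine Finset.sum_congr rfl (fun v hv => ?_)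
      simp only [Finset.mem_filter, Finset.mem_univ, true_and] at hv
      refine Finset.card_bij (fun x _ => ((v, x) : V × E)) ?_ ?_ ?_
      · intro x hx
        simp only [Finset.mem_inter, hCf, Le, Finset.mem_filter, Finset.mem_univ,
          true_and] at hx
        simp [Finset.mem_filter, Lf, hv, hx.1, hx.2]
      · intro x1 _ x2 _ h12
        simpa using congrArg Prod.snd h12
      · rintro ⟨pv, px⟩ hp
        simp only [Finset.mem_filter, Lf, Finset.mem_univ, true_and] at hp
        obtain ⟨⟨hb, hc, hm⟩, hfst⟩ := hp
        subst hfst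
        refine ⟨px, ?_, rfl⟩
        simp only [Finset.mem_inter, hCf, Le, Finset.mem_filter, Finset.mem_univ, true_and]
        exact ⟨hc, hm⟩
    have hint2 : ∀ v ∈ intf, ((Cf ∩ G.Ie v).card + (Cf ∩ G.Le v).card) = 2 := by
      intro v hv
      simp only [hintf, Finset.mem_filter, Finset.mem_univ, true_and] at hv
      obtain ⟨hnb, hex⟩ := hv
      have hIsub : G.Ie v ⊆ Cf := by
        intro y hy
        simp only [Ie, Finset.mem_filter, Finset.mem_univ, true_and] at hy
        simp only [hCf, Finset.mem_filter, Finset.mem_univ, true_and]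
        exact hclosure v hnb hex y hy
      have h1 : Cf ∩ G.Ie v = G.Ie v := Finset.inter_eq_right.2 hIsub
      have h2 : Cf ∩ G.Le v = G.Le v :=
        Finset.inter_eq_right.2 (fun y hy => hIsub (G.Le_subset_Ie v hy))
      rw [h1, h2, ← G.degree_eq]
      have := hleaf v; omega
    have hzero : ∀ v ∈ univ.filter (fun v => ¬ 3 ≤ G.degree v), v ∉ intf →
        ((Cf ∩ G.Ie v).card + (Cf ∩ G.Le v).card) = 0 := by
      intro v hv hvn
      simp only [Finset.mem_filter, Finset.mem_univ, true_and] at hv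
      have hIe : Cf ∩ G.Ie v = ∅ := by
        rw [Finset.eq_empty_iff_forall_notMem]
        intro y hy
        simp only [Finset.mem_inter, hCf, Ie, Finset.mem_filter, Finset.mem_univ,
          true_and] at hy
        exact hvn (by
          simp only [hintf, Finset.mem_filter, Finset.mem_univ, true_and]
          exact ⟨hv, y, hy.1, hy.2⟩)
      have hLe : Cf ∩ G.Le v = ∅ := by
        rw [Finset.eq_empty_iff_forall_notMem]
        intro y hy
        have : y ∈ Cf ∩ G.Ie v :=
          Finset.mem_inter.2 ⟨(Finset.mem_inter.1 hy).1,
            G.Le_subset_Ie v (Finset.mem_inter.1 hy).2⟩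
        rw [hIe] at this
        exact Finset.notMem_empty _ this
      rw [hIe, hLe]; simp
    have hnonbr : ∑ v ∈ univ.filter (fun v => ¬ 3 ≤ G.degree v),
        ((Cf ∩ G.Ie v).card + (Cf ∩ G.Le v).card) = 2 * intf.card := by
      have hsub : intf ⊆ univ.filter (fun v => ¬ 3 ≤ G.degree v) := by
        intro v hv
        simp only [hintf, Finset.mem_filter, Finset.mem_univ, true_and] at hv
        simp only [Finset.mem_filter, Finset.mem_univ, true_and]
        exact hv.1
      rw [← Finset.sum_subset hsub hzero, Finset.sum_congr rfl hint2,
        Finset.sum_const, smul_eq_mul, mul_comm]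
    have hsplit := Finset.sum_filter_add_sum_filter_not univ (fun v => 3 ≤ G.degree v)
      (fun v => ((Cf ∩ G.Ie v).card + (Cf ∩ G.Le v).card))
    have hbranch : ∑ v ∈ univ.filter (fun v => 3 ≤ G.degree v),
        ((Cf ∩ G.Ie v).card + (Cf ∩ G.Le v).card)
        = (G.Pf e₀).card + (G.Lf e₀).card := by
      rw [Finset.sum_add_distrib, hP, hL]
    have hhs := G.hs Cf
    rw [← hsplit, hbranch, hnonbr] at hhs
    omega
  omega

lemma mem_Ie {G : Multigraph V E} {v : V} {x : E} : x ∈ G.Ie v ↔ v ∈ G.ends x := by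
  simp [Ie]

lemma mem_Le {G : Multigraph V E} {v : V} {x : E} : x ∈ G.Le v ↔ G.ends x = s(v, v) := by
  simp [Le]

lemma mem_Pf {G : Multigraph V E} {x : E} {p : V × E} :
    p ∈ G.Pf x ↔ 3 ≤ G.degree p.1 ∧ G.Chain x p.2 ∧ p.1 ∈ G.ends p.2 := by
  simp [Pf]

lemma Pf_congr {G : Multigraph V E} {x y : E} (h : G.Chain x y) : G.Pf x = G.Pf y := by
  ext p
  simp only [mem_Pf]
  exact ⟨fun ⟨h1, h2, h3⟩ => ⟨h1, h.symm.trans h2, h3⟩,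
    fun ⟨h1, h2, h3⟩ => ⟨h1, h.trans h2, h3⟩⟩

/-- If two distinct branch-incidence pairs lie in a class, they are all of them. -/
lemma pf_eq_pair {G : Multigraph V E} (hconn : G.Connected) (hleaf : G.Leafless)
    {b₀ : V} (hb₀ : 3 ≤ G.degree b₀) {x : E} {p q : V × E}
    (hp : p ∈ G.Pf x) (hq : q ∈ G.Pf x) (hne : p ≠ q) : G.Pf x = {p, q} := by
  have hm := G.pf_lf_card hconn hleaf hb₀ x
  have hsub : ({p, q} : Finset (V × E)) ⊆ G.Pf x := by
    intro t ht
    rcases Finset.mem_insert.1 ht with rfl | ht'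
    · exact hp
    · rw [Finset.mem_singleton.1 ht']; exact hq
  have hcard : ({p, q} : Finset (V × E)).card = 2 := by
    rw [Finset.card_insert_of_notMem (by simpa using hne), Finset.card_singleton]
  exact (Finset.eq_of_subset_of_card_le hsub (by omega)).symm

lemma exists_second_pair {G : Multigraph V E} (hconn : G.Connected) (hleaf : G.Leafless)
    {b₀ : V} (hb₀ : 3 ≤ G.degree b₀) {x : E} {vx : V}
    (hbx : 3 ≤ G.degree vx) (hix : vx ∈ G.ends x) (hnl : G.Lf x = ∅) :
    ∃ p, p ∈ G.Pf x ∧ p ≠ (vx, x) := by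
  have h4 := G.pf_lf_card hconn hleaf hb₀ x
  rw [hnl, Finset.card_empty] at h4
  obtain ⟨p, hp, hne⟩ := Finset.exists_mem_ne (s := G.Pf x) (by omega) (vx, x)
  exact ⟨p, hp, hne⟩

lemma loop_class_pure {G : Multigraph V E} (hconn : G.Connected) (hleaf : G.Leafless)
    {b₀ : V} (hb₀ : 3 ≤ G.degree b₀) {ℓ : E} {b : V}
    (hb : 3 ≤ G.degree b) (hl : G.ends ℓ = s(b, b)) :
    ∀ p ∈ G.Pf ℓ, p = (b, ℓ) := by
  have h4 := G.pf_lf_card hconn hleaf hb₀ ℓ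
  have hbe : b ∈ G.ends ℓ := by rw [hl]; exact Sym2.mem_mk_left _ _
  have hPm : (b, ℓ) ∈ G.Pf ℓ := mem_Pf.2 ⟨hb, Chain.refl _, hbe⟩
  have hLm : (b, ℓ) ∈ G.Lf ℓ := by simp [Lf, hb, Chain.refl, hl]
  have hP1 : (G.Pf ℓ).card = 1 := by
    have c1 := Finset.card_pos.2 ⟨_, hPm⟩
    have c2 := Finset.card_pos.2 ⟨_, hLm⟩
    omega
  obtain ⟨r, hr⟩ := Finset.card_eq_one.1 hP1
  intro p hp
  rw [hr, Finset.mem_singleton] at hp hPm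
  rw [hp, ← hPm]

lemma branch_preimage {G : Multigraph V E} (f : G.Aut) {x : E} {w : V}
    (hw : w ∈ G.ends (f.toE x)) : ∃ t, t ∈ G.ends x ∧ f.toV t = w ∧ G.degree t = G.degree w := by
  rw [f.ends_map] at hw
  obtain ⟨t, ht, hft⟩ := Sym2.mem_map.1 hw
  exact ⟨t, ht, hft, by rw [← hft, f.degree_map]⟩

lemma aut_finite (G : Multigraph V E) : Finite G.Aut := by
  have hinj : Function.Injective (fun f : G.Aut => (f.toV, f.toE)) := by
    intro f g h
    have h1 := congrArg Prod.fst h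
    have h2 := congrArg Prod.snd h
    simp only at h1 h2
    exact Aut.ext_of (fun v => by rw [h1]) (fun e => by rw [h2])
  exact Finite.of_injective _ hinj

section Cases

variable (G : Multigraph V E)


private lemma forced_other {α : Type} {u v z x y : α} (hx : x = u ∨ x = v)
    (hy : y = u ∨ y = v) (hz : z = u ∨ z = v) (hxz : x ≠ z) (hyz : y ≠ z) : x = y := by
  rcases hx with h1 | h1 <;> rcases hy with h2 | h2 <;> rcases hz with h3 | h3 <;> simp_all

private lemma forced_other3 {α : Type} {u v w z1 z2 x y : α}
    (hx : x = u ∨ x = v ∨ x = w) (hy : y = u ∨ y = v ∨ y = w)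
    (hz1 : z1 = u ∨ z1 = v ∨ z1 = w) (hz2 : z2 = u ∨ z2 = v ∨ z2 = w)
    (hz12 : z1 ≠ z2) (hxz1 : x ≠ z1) (hxz2 : x ≠ z2) (hyz1 : y ≠ z1) (hyz2 : y ≠ z2) :
    x = y := by
  rcases hx with h1 | h1 | h1 <;> rcases hy with h2 | h2 | h2 <;>
    rcases hz1 with h3 | h3 | h3 <;> rcases hz2 with h4 | h4 | h4 <;> simp_all

private lemma pair_of_mem {α : Type} {s : Finset α} {x : α} (h2 : s.card = 2) (hx : x ∈ s) :
    ∃ y, y ≠ x ∧ s = {x, y} := by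
  have hsub : ({x} : Finset α) ⊆ s := by simpa using hx
  have hc : (s \ {x}).card = 1 := by
    rw [Finset.card_sdiff_of_subset hsub, Finset.card_singleton, h2]
  obtain ⟨y, hy⟩ := Finset.card_eq_one.1 hc
  have hyx : y ∈ s \ {x} := by rw [hy]; exact Finset.mem_singleton_self _
  rw [Finset.mem_sdiff, Finset.mem_singleton] at hyx
  refine ⟨y, hyx.2, ?_⟩
  have hcard : ({x, y} : Finset α).card = 2 := by
    rw [Finset.card_insert_of_notMem
      (by simp only [Finset.mem_singleton]; exact fun h => hyx.2 h.symm),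
      Finset.card_singleton]
  symm
  apply Finset.eq_of_subset_of_card_le
  · intro t ht
    rcases Finset.mem_insert.1 ht with rfl | ht'
    · exact hx
    · rw [Finset.mem_singleton.1 ht']; exact hyx.1
  · omega

private lemma triple_of_mem2 {α : Type} {s : Finset α} {x y : α} (h3 : s.card = 3)
    (hx : x ∈ s) (hy : y ∈ s) (hyx : y ≠ x) :
    ∃ z, z ≠ x ∧ z ≠ y ∧ s = {x, y, z} := by
  have hsub : ({x, y} : Finset α) ⊆ s := by
    intro t ht
    rcases Finset.mem_insert.1 ht with rfl | ht'
    · exact hx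
    · rw [Finset.mem_singleton.1 ht']; exact hy
  have hcxy : ({x, y} : Finset α).card = 2 := by
    rw [Finset.card_insert_of_notMem
      (by simp only [Finset.mem_singleton]; exact fun h => hyx h.symm),
      Finset.card_singleton]
  have hc : (s \ {x, y}).card = 1 := by rw [Finset.card_sdiff_of_subset hsub, hcxy, h3]
  obtain ⟨z, hz⟩ := Finset.card_eq_one.1 hc
  have hzs : z ∈ s \ {x, y} := by rw [hz]; exact Finset.mem_singleton_self _
  rw [Finset.mem_sdiff, Finset.mem_insert, Finset.mem_singleton] at hzs
  push_neg at hzs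
  obtain ⟨hzs1, hzs2, hzs3⟩ := hzs
  refine ⟨z, hzs2, hzs3, ?_⟩
  have hcyz : ({y, z} : Finset α).card = 2 := by
    rw [Finset.card_insert_of_notMem
      (by simp only [Finset.mem_singleton]; exact fun h => hzs3 h.symm),
      Finset.card_singleton]
  have hcard : ({x, y, z} : Finset α).card = 3 := by
    rw [Finset.card_insert_of_notMem
      (by simp only [Finset.mem_insert, Finset.mem_singleton]
          push_neg
          exact ⟨fun h => hyx h.symm, fun h => hzs2 h.symm⟩), hcyz]
  symm
  apply Finset.eq_of_subset_of_card_le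
  · intro t ht
    rcases Finset.mem_insert.1 ht with rfl | ht'
    · exact hx
    rcases Finset.mem_insert.1 ht' with rfl | ht''
    · exact hy
    · rw [Finset.mem_singleton.1 ht'']; exact hzs1
  · omega

private lemma triple_of_mem {α : Type} {s : Finset α} {x : α} (h3 : s.card = 3)
    (hx : x ∈ s) : ∃ y z, y ≠ x ∧ z ≠ x ∧ z ≠ y ∧ s = {x, y, z} := by
  have h1 : 1 < s.card := by omega
  obtain ⟨y, hy, hyx⟩ := Finset.exists_mem_ne h1 x
  obtain ⟨z, hz1, hz2, hz3⟩ := triple_of_mem2 h3 hx hy hyx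
  exact ⟨y, z, hyx, hz1, hz2, hz3⟩

private lemma quad_of_mem2 {α : Type} {s : Finset α} {x y : α} (h4 : s.card = 4)
    (hx : x ∈ s) (hy : y ∈ s) (hyx : y ≠ x) :
    ∃ z t, z ≠ x ∧ z ≠ y ∧ t ≠ x ∧ t ≠ y ∧ t ≠ z ∧ s = {x, y, z, t} := by
  have hsub : ({x, y} : Finset α) ⊆ s := by
    intro u hu
    rcases Finset.mem_insert.1 hu with rfl | hu'
    · exact hx
    · rw [Finset.mem_singleton.1 hu']; exact hy
  have hcxy : ({x, y} : Finset α).card = 2 := by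
    rw [Finset.card_insert_of_notMem
      (by simp only [Finset.mem_singleton]; exact fun h => hyx h.symm),
      Finset.card_singleton]
  have hc : (s \ {x, y}).card = 2 := by rw [Finset.card_sdiff_of_subset hsub, hcxy, h4]
  obtain ⟨z, t, hzt, hst⟩ := Finset.card_eq_two.1 hc
  have hzs : z ∈ s \ {x, y} := by rw [hst]; simp
  have hts : t ∈ s \ {x, y} := by rw [hst]; simp
  rw [Finset.mem_sdiff, Finset.mem_insert, Finset.mem_singleton] at hzs hts
  push_neg at hzs hts
  obtain ⟨hzs1, hzs2, hzs3⟩ := hzs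
  obtain ⟨hts1, hts2, hts3⟩ := hts
  refine ⟨z, t, hzs2, hzs3, hts2, hts3, fun h => hzt h.symm, ?_⟩
  have hczt : ({z, t} : Finset α).card = 2 := by
    rw [Finset.card_insert_of_notMem
      (by simp only [Finset.mem_singleton]; exact hzt), Finset.card_singleton]
  have hcyzt : ({y, z, t} : Finset α).card = 3 := by
    rw [Finset.card_insert_of_notMem
      (by simp only [Finset.mem_insert, Finset.mem_singleton]
          push_neg
          exact ⟨fun h => hzs3 h.symm, fun h => hts3 h.symm⟩), hczt]
  have hcard : ({x, y, z, t} : Finset α).card = 4 := by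
    rw [Finset.card_insert_of_notMem
      (by simp only [Finset.mem_insert, Finset.mem_singleton]
          push_neg
          exact ⟨fun h => hyx h.symm, fun h => hzs2 h.symm, fun h => hts2 h.symm⟩), hcyzt]
  symm
  apply Finset.eq_of_subset_of_card_le
  · intro u hu
    rcases Finset.mem_insert.1 hu with rfl | hu'
    · exact hx
    rcases Finset.mem_insert.1 hu' with rfl | hu''
    · exact hy
    rcases Finset.mem_insert.1 hu'' with rfl | hu3
    · exact hzs1
    · rw [Finset.mem_singleton.1 hu3]; exact hts1
  · omega

private lemma card_le_of_inj (G : Multigraph V E) {X : Type} [Fintype X] (n : ℕ)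
    (hn : Fintype.card X ≤ n) (Φ : G.Aut → X) (hΦ : Function.Injective Φ) :
    Nat.card G.Aut ≤ n :=
  le_trans (le_of_le_of_eq (Nat.card_le_card_of_injective Φ hΦ) Nat.card_eq_fintype_card) hn

lemma case_two_00 (hconn : G.Connected) (hleaf : G.Leafless) {a b : V} (hab : a ≠ b) (ha3 : G.degree a = 3) (hb3 : G.degree b = 3)
    (hbr : ∀ v, 3 ≤ G.degree v → v = a ∨ v = b)
    (hLa : G.Le a = ∅) (hLb : G.Le b = ∅) : Nat.card G.Aut ≤ 12 := by
  have ha3' : 3 ≤ G.degree a := by omega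
  have hb3' : 3 ≤ G.degree b := by omega
  have hdega := G.degree_eq a
  have hdegb := G.degree_eq b
  have hIa : (G.Ie a).card = 3 := by rw [hLa] at hdega; simp at hdega; omega
  have hIb : (G.Ie b).card = 3 := by rw [hLb] at hdegb; simp at hdegb; omega
  have hLf : ∀ x : E, G.Lf x = ∅ := by
    intro x
    rw [Finset.eq_empty_iff_forall_notMem]
    rintro ⟨v, y⟩ hp
    simp only [Lf, Finset.mem_filter, Finset.mem_univ, true_and] at hp
    obtain ⟨hbv, hcy, hey⟩ := hp
    rcases hbr v hbv with rfl | rfl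
    · have h2 : y ∈ G.Le v := mem_Le.2 hey
      rw [hLa] at h2; exact Finset.notMem_empty _ h2
    · have h2 : y ∈ G.Le v := mem_Le.2 hey
      rw [hLb] at h2; exact Finset.notMem_empty _ h2
  have hdich : ∀ f : G.Aut, f.toV a = a ∨ f.toV a = b := fun f => hbr _ (f.branch_map ha3')
  have hVba : ∀ f : G.Aut, f.toV a = a → f.toV b = b := by
    intro f h
    rcases hbr _ (f.branch_map hb3') with h' | h'
    · exact absurd (f.toV.injective (h'.trans h.symm)) (fun hq => hab hq.symm)
    · exact h'
  have hVbb : ∀ f : G.Aut, f.toV a = b → f.toV b = a := by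
    intro f h
    rcases hbr _ (f.branch_map hb3') with h' | h'
    · exact h'
    · exact absurd (f.toV.injective (h'.trans h.symm)) (fun hq => hab hq.symm)
  have hmem1 : ∀ (f : G.Aut), f.toV a = a → ∀ x : E, x ∈ G.Ie a → f.toE x ∈ G.Ie a := by
    intro f h x hx
    have h2 := f.mem_ends (mem_Ie.1 hx)
    rw [h] at h2
    exact mem_Ie.2 h2
  have hmem2 : ∀ (f : G.Aut), f.toV a = b → ∀ x : E, x ∈ G.Ie a → f.toE x ∈ G.Ie b := by
    intro f h x hx
    have h2 := f.mem_ends (mem_Ie.1 hx)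
    rw [h] at h2
    exact mem_Ie.2 h2
  by_cases hD : ∃ x y, x ∈ G.Ie a ∧ y ∈ G.Ie a ∧ y ≠ x ∧ G.Chain x y
  · -- dumbbell case
    obtain ⟨pa, qa, hpaI, hqaI, hqp, hcpq⟩ := hD
    have hmem1b : ∀ (f : G.Aut), f.toV b = b → ∀ x : E, x ∈ G.Ie b → f.toE x ∈ G.Ie b := by
      intro f h x hx
      have h2 := f.mem_ends (mem_Ie.1 hx)
      rw [h] at h2
      exact mem_Ie.2 h2
    have hmem2b : ∀ (f : G.Aut), f.toV b = a → ∀ x : E, x ∈ G.Ie b → f.toE x ∈ G.Ie a := by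
      intro f h x hx
      have h2 := f.mem_ends (mem_Ie.1 hx)
      rw [h] at h2
      exact mem_Ie.2 h2
    have hPfpa : G.Pf pa = {(a, pa), (a, qa)} :=
      pf_eq_pair hconn hleaf ha3' (mem_Pf.2 ⟨ha3', Chain.refl _, mem_Ie.1 hpaI⟩)
        (mem_Pf.2 ⟨ha3', hcpq, mem_Ie.1 hqaI⟩)
        (fun hq => hqp (congrArg Prod.snd hq).symm)
    have hbpa : b ∉ G.ends pa := by
      intro hq
      have hm : ((b, pa) : V × E) ∈ G.Pf pa := mem_Pf.2 ⟨hb3', Chain.refl _, hq⟩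
      rw [hPfpa] at hm
      simp only [Finset.mem_insert, Finset.mem_singleton, Prod.mk.injEq] at hm
      rcases hm with ⟨hq', -⟩ | ⟨hq', -⟩ <;> exact hab hq'.symm
    have hbqa : b ∉ G.ends qa := by
      intro hq
      have hm : ((b, qa) : V × E) ∈ G.Pf pa := mem_Pf.2 ⟨hb3', hcpq, hq⟩
      rw [hPfpa] at hm
      simp only [Finset.mem_insert, Finset.mem_singleton, Prod.mk.injEq] at hm
      rcases hm with ⟨hq', -⟩ | ⟨hq', -⟩ <;> exact hab hq'.symm
    obtain ⟨ra, hra1, hra2, hIaset⟩ := triple_of_mem2 hIa hpaI hqaI hqp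
    have hraI : ra ∈ G.Ie a := by rw [hIaset]; simp
    have hnco : ¬ G.Chain pa ra := by
      intro hc
      have hm : ((a, ra) : V × E) ∈ G.Pf pa := mem_Pf.2 ⟨ha3', hc, mem_Ie.1 hraI⟩
      rw [hPfpa] at hm
      simp only [Finset.mem_insert, Finset.mem_singleton, Prod.mk.injEq] at hm
      rcases hm with ⟨-, hq'⟩ | ⟨-, hq'⟩
      · exact hra1 hq'
      · exact hra2 hq'
    have hnco' : ¬ G.Chain qa ra := fun hc => hnco (hcpq.trans hc)
    obtain ⟨p, hpPf, hpne⟩ := exists_second_pair hconn hleaf ha3' ha3' (mem_Ie.1 hraI) (hLf ra)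
    obtain ⟨hbp, hcp, hep⟩ := mem_Pf.1 hpPf
    have hpb : p.1 = b := by
      rcases hbr p.1 hbp with h | h
      · exfalso
        have hx2 : p.2 ∈ G.Ie a := mem_Ie.2 (by rw [← h]; exact hep)
        rw [hIaset] at hx2
        simp only [Finset.mem_insert, Finset.mem_singleton] at hx2
        rcases hx2 with rfl | rfl | rfl
        · exact hnco hcp.symm
        · exact hnco' hcp.symm
        · exact hpne (by rw [← h])
      · exact h
    have hcrb : G.Chain ra p.2 := hcp
    have hrbI : p.2 ∈ G.Ie b := mem_Ie.2 (by rw [← hpb]; exact hep)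
    set rb := p.2 with hrbdef
    have hPfra : G.Pf ra = {(a, ra), (b, rb)} :=
      pf_eq_pair hconn hleaf ha3' (mem_Pf.2 ⟨ha3', Chain.refl _, mem_Ie.1 hraI⟩)
        (mem_Pf.2 ⟨hb3', hcrb, mem_Ie.1 hrbI⟩)
        (fun hq => hab (congrArg Prod.fst hq))
    obtain ⟨mb1, mb2, hmb1ne, hmb2ne, hmb21, hIbset⟩ := triple_of_mem hIb hrbI
    have hmb1I : mb1 ∈ G.Ie b := by rw [hIbset]; simp
    have hmb2I : mb2 ∈ G.Ie b := by rw [hIbset]; simp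
    have hnco_mb1 : ¬ G.Chain ra mb1 := by
      intro hc
      have hm : ((b, mb1) : V × E) ∈ G.Pf ra := mem_Pf.2 ⟨hb3', hc, mem_Ie.1 hmb1I⟩
      rw [hPfra] at hm
      simp only [Finset.mem_insert, Finset.mem_singleton, Prod.mk.injEq] at hm
      rcases hm with ⟨hq', -⟩ | ⟨-, hq'⟩
      · exact hab hq'.symm
      · exact hmb1ne hq'
    have hc_mb : G.Chain mb1 mb2 := by
      obtain ⟨p2, hp2Pf, hp2ne⟩ :=
        exists_second_pair hconn hleaf ha3' hb3' (mem_Ie.1 hmb1I) (hLf mb1)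
      obtain ⟨hbp2, hcp2, hep2⟩ := mem_Pf.1 hp2Pf
      rcases hbr p2.1 hbp2 with h | h
      · exfalso
        have hx2 : p2.2 ∈ G.Ie a := mem_Ie.2 (by rw [← h]; exact hep2)
        rw [hIaset] at hx2
        simp only [Finset.mem_insert, Finset.mem_singleton] at hx2
        rcases hx2 with h2 | h2 | h2
        · rw [h2] at hcp2
          have hm : ((b, mb1) : V × E) ∈ G.Pf pa := mem_Pf.2 ⟨hb3', hcp2.symm, mem_Ie.1 hmb1I⟩
          rw [hPfpa] at hm
          simp only [Finset.mem_insert, Finset.mem_singleton, Prod.mk.injEq] at hm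
          rcases hm with ⟨hq', -⟩ | ⟨hq', -⟩ <;> exact hab hq'.symm
        · rw [h2] at hcp2
          have hm : ((b, mb1) : V × E) ∈ G.Pf pa :=
            mem_Pf.2 ⟨hb3', hcpq.trans hcp2.symm, mem_Ie.1 hmb1I⟩
          rw [hPfpa] at hm
          simp only [Finset.mem_insert, Finset.mem_singleton, Prod.mk.injEq] at hm
          rcases hm with ⟨hq', -⟩ | ⟨hq', -⟩ <;> exact hab hq'.symm
        · rw [h2] at hcp2
          exact hnco_mb1 hcp2.symm
      · have hx2 : p2.2 ∈ G.Ie b := mem_Ie.2 (by rw [← h]; exact hep2)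
        rw [hIbset] at hx2
        simp only [Finset.mem_insert, Finset.mem_singleton] at hx2
        rcases hx2 with h2 | h2 | h2
        · rw [h2] at hcp2
          exact absurd (hcrb.trans hcp2.symm) hnco_mb1
        · exact absurd (by rw [← h, ← h2] : (p2.1, p2.2) = (b, mb1)) hp2ne
        · rw [h2] at hcp2
          exact hcp2
    have hPfmb1 : G.Pf mb1 = {(b, mb1), (b, mb2)} :=
      pf_eq_pair hconn hleaf ha3' (mem_Pf.2 ⟨hb3', Chain.refl _, mem_Ie.1 hmb1I⟩)
        (mem_Pf.2 ⟨hb3', hc_mb, mem_Ie.1 hmb2I⟩)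
        (fun hq => hmb21 (congrArg Prod.snd hq).symm)
    have hamb1 : a ∉ G.ends mb1 := by
      intro hq
      have hm : ((a, mb1) : V × E) ∈ G.Pf mb1 := mem_Pf.2 ⟨ha3', Chain.refl _, hq⟩
      rw [hPfmb1] at hm
      simp only [Finset.mem_insert, Finset.mem_singleton, Prod.mk.injEq] at hm
      rcases hm with ⟨hq', -⟩ | ⟨hq', -⟩ <;> exact hab hq'
    have hamb2 : a ∉ G.ends mb2 := by
      intro hq
      have hm : ((a, mb2) : V × E) ∈ G.Pf mb1 := mem_Pf.2 ⟨ha3', hc_mb, hq⟩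
      rw [hPfmb1] at hm
      simp only [Finset.mem_insert, Finset.mem_singleton, Prod.mk.injEq] at hm
      rcases hm with ⟨hq', -⟩ | ⟨hq', -⟩ <;> exact hab hq'
    -- distinctness between the two sides
    have hd1 : pa ≠ mb1 := fun h => hbpa (by rw [h]; exact mem_Ie.1 hmb1I)
    have hd2 : pa ≠ mb2 := fun h => hbpa (by rw [h]; exact mem_Ie.1 hmb2I)
    have hd3 : qa ≠ mb1 := fun h => hbqa (by rw [h]; exact mem_Ie.1 hmb1I)
    have hd4 : qa ≠ mb2 := fun h => hbqa (by rw [h]; exact mem_Ie.1 hmb2I)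
    -- exclusion lemmas
    have hnotra : ∀ (f : G.Aut) (x y : E) (u : V), x ∈ G.Ie u → y ∈ G.Ie u → y ≠ x →
        G.Chain x y → f.toV u = a → f.toE x ≠ ra := by
      intro f x y u hx hy hyx hc h h1
      have hyI : f.toE y ∈ G.Ie a := by
        have h2 := f.mem_ends (mem_Ie.1 hy)
        rw [h] at h2
        exact mem_Ie.2 h2
      have hmemq : ((a, f.toE y) : V × E) ∈ G.Pf (f.toE x) :=
        mem_Pf.2 ⟨ha3', f.chain_map hc, mem_Ie.1 hyI⟩
      rw [h1, hPfra] at hmemq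
      simp only [Finset.mem_insert, Finset.mem_singleton, Prod.mk.injEq] at hmemq
      rcases hmemq with ⟨-, hq⟩ | ⟨hq, -⟩
      · exact hyx (f.toE.injective (hq.trans h1.symm))
      · exact hab hq
    have hnotrb : ∀ (f : G.Aut) (x y : E) (u : V), x ∈ G.Ie u → y ∈ G.Ie u → y ≠ x →
        G.Chain x y → f.toV u = b → f.toE x ≠ rb := by
      intro f x y u hx hy hyx hc h h1
      have hyI : f.toE y ∈ G.Ie b := by
        have h2 := f.mem_ends (mem_Ie.1 hy)
        rw [h] at h2
        exact mem_Ie.2 h2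
      have hPfrb : G.Pf rb = {(a, ra), (b, rb)} := by rw [← Pf_congr hcrb]; exact hPfra
      have hmemq : ((b, f.toE y) : V × E) ∈ G.Pf (f.toE x) :=
        mem_Pf.2 ⟨hb3', f.chain_map hc, mem_Ie.1 hyI⟩
      rw [h1, hPfrb] at hmemq
      simp only [Finset.mem_insert, Finset.mem_singleton, Prod.mk.injEq] at hmemq
      rcases hmemq with ⟨hq, -⟩ | ⟨-, hq⟩
      · exact hab hq.symm
      · exact hyx (f.toE.injective (hq.trans h1.symm))
    -- membership disjunctions
    have hdisjA : ∀ (k : G.Aut) (u : V), k.toV u = a → ∀ x, x ∈ G.Ie u →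
        (k.toE x = pa ∨ k.toE x = qa ∨ k.toE x = ra) := by
      intro k u hk x hx
      have h2 := k.mem_ends (mem_Ie.1 hx)
      rw [hk] at h2
      have h3 : k.toE x ∈ G.Ie a := mem_Ie.2 h2
      rw [hIaset] at h3
      simpa using h3
    have hdisjB : ∀ (k : G.Aut) (u : V), k.toV u = b → ∀ x, x ∈ G.Ie u →
        (k.toE x = rb ∨ k.toE x = mb1 ∨ k.toE x = mb2) := by
      intro k u hk x hx
      have h2 := k.mem_ends (mem_Ie.1 hx)
      rw [hk] at h2
      have h3 : k.toE x ∈ G.Ie b := mem_Ie.2 h2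
      rw [hIbset] at h3
      simpa using h3
    -- refined image facts
    have himgA : ∀ (k : G.Aut) (u : V) (x y : E), k.toV u = a → x ∈ G.Ie u → y ∈ G.Ie u →
        y ≠ x → G.Chain x y → (k.toE x = pa ∨ k.toE x = qa) := by
      intro k u x y hk hx hy hyx hc
      rcases hdisjA k u hk x hx with h1 | h1 | h1
      · exact Or.inl h1
      · exact Or.inr h1
      · exact absurd h1 (hnotra k x y u hx hy hyx hc hk)
    have himgB : ∀ (k : G.Aut) (u : V) (x y : E), k.toV u = b → x ∈ G.Ie u → y ∈ G.Ie u →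
        y ≠ x → G.Chain x y → (k.toE x = mb1 ∨ k.toE x = mb2) := by
      intro k u x y hk hx hy hyx hc
      rcases hdisjB k u hk x hx with h1 | h1 | h1
      · exact absurd h1 (hnotrb k x y u hx hy hyx hc hk)
      · exact Or.inl h1
      · exact Or.inr h1
    -- the injection
    set S4 : Finset E := {pa, qa, mb1, mb2} with hS4
    have hfpaS4 : ∀ f : G.Aut, f.toE pa ∈ S4 := by
      intro f
      rcases hdich f with h | h
      · rcases himgA f a pa qa h hpaI hqaI hqp hcpq with h1 | h1 <;>
          simp [hS4, h1]
      · rcases himgB f a pa qa h hpaI hqaI hqp hcpq with h1 | h1 <;>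
          simp [hS4, h1]
    set Φ : G.Aut → ↥S4 × Bool := fun f =>
      (⟨f.toE pa, hfpaS4 f⟩, decide (f.toE mb1 = mb1 ∨ f.toE mb1 = pa)) with hΦ
    have hΦinj : Function.Injective Φ := by
      intro f g h
      rw [hΦ, Prod.ext_iff, Subtype.ext_iff] at h
      obtain ⟨h1, hbit⟩ := h
      simp only at h1 hbit
      rw [decide_eq_decide] at hbit
      by_cases hfa : f.toV a = a
      · have hga : g.toV a = a := by
          by_contra hga
          have hgb := (hdich g).resolve_left hga
          rcases himgA f a pa qa hfa hpaI hqaI hqp hcpq with h2 | h2 <;>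
            rcases himgB g a pa qa hgb hpaI hqaI hqp hcpq with h3 | h3
          · exact hd1 (h2.symm.trans (h1.trans h3))
          · exact hd2 (h2.symm.trans (h1.trans h3))
          · exact hd3 (h2.symm.trans (h1.trans h3))
          · exact hd4 (h2.symm.trans (h1.trans h3))
        have hfb : f.toV b = b := hVba f hfa
        have hgb : g.toV b = b := hVba g hga
        have hqaE : f.toE qa = g.toE qa := by
          refine forced_other (himgA f a qa pa hfa hqaI hpaI (fun hq => hqp hq.symm) hcpq.symm)
            (himgA g a qa pa hga hqaI hpaI (fun hq => hqp hq.symm) hcpq.symm)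
            (z := f.toE pa) (himgA f a pa qa hfa hpaI hqaI hqp hcpq) ?_ ?_
          · exact fun hq => hqp (f.toE.injective hq)
          · rw [h1]; exact fun hq => hqp (g.toE.injective hq)
        have hraE : f.toE ra = g.toE ra := by
          refine forced_other3 (hdisjA f a hfa ra hraI) (hdisjA g a hga ra hraI)
            (z1 := f.toE pa) (z2 := f.toE qa) (hdisjA f a hfa pa hpaI)
            (hdisjA f a hfa qa hqaI) ?_ ?_ ?_ ?_ ?_
          · exact fun hq => hqp (f.toE.injective hq).symm
          · exact fun hq => hra1 (f.toE.injective hq)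
          · exact fun hq => hra2 (f.toE.injective hq)
          · rw [h1]; exact fun hq => hra1 (g.toE.injective hq)
          · rw [hqaE]; exact fun hq => hra2 (g.toE.injective hq)
        have hfm1 := himgB f b mb1 mb2 hfb hmb1I hmb2I hmb21 hc_mb
        have hgm1 := himgB g b mb1 mb2 hgb hmb1I hmb2I hmb21 hc_mb
        have hmb1E : f.toE mb1 = g.toE mb1 := by
          by_cases hc1 : f.toE mb1 = mb1
          · rcases hbit.1 (Or.inl hc1) with h2 | h2
            · rw [hc1, h2]
            · exfalso
              rcases hgm1 with h3 | h3
              · exact hd1 (h2.symm.trans h3)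
              · exact hd2 (h2.symm.trans h3)
          · have hfm1' : f.toE mb1 = mb2 := by
              rcases hfm1 with h2 | h2
              · exact absurd h2 hc1
              · exact h2
            have hgc1 : ¬ g.toE mb1 = mb1 := by
              intro hgc
              rcases hbit.2 (Or.inl hgc) with h2 | h2
              · exact hc1 h2
              · rcases hfm1 with h3 | h3
                · exact hd1 (h2.symm.trans h3)
                · exact hd2 (h2.symm.trans h3)
            have hgm1' : g.toE mb1 = mb2 := by
              rcases hgm1 with h2 | h2
              · exact absurd h2 hgc1
              · exact h2
            rw [hfm1', hgm1']
        have hmb2E : f.toE mb2 = g.toE mb2 := by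
          refine forced_other (himgB f b mb2 mb1 hfb hmb2I hmb1I (fun hq => hmb21 hq.symm) hc_mb.symm)
            (himgB g b mb2 mb1 hgb hmb2I hmb1I (fun hq => hmb21 hq.symm) hc_mb.symm)
            (z := f.toE mb1) hfm1 ?_ ?_
          · exact fun hq => hmb21 (f.toE.injective hq)
          · rw [hmb1E]; exact fun hq => hmb21 (g.toE.injective hq)
        have hrbE : f.toE rb = g.toE rb := by
          refine forced_other3 (hdisjB f b hfb rb hrbI) (hdisjB g b hgb rb hrbI)
            (z1 := f.toE mb1) (z2 := f.toE mb2) (hdisjB f b hfb mb1 hmb1I)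
            (hdisjB f b hfb mb2 hmb2I) ?_ ?_ ?_ ?_ ?_
          · exact fun hq => hmb21 (f.toE.injective hq).symm
          · exact fun hq => hmb1ne (f.toE.injective hq).symm
          · exact fun hq => hmb2ne (f.toE.injective hq).symm
          · rw [hmb1E]; exact fun hq => hmb1ne (g.toE.injective hq).symm
          · rw [hmb2E]; exact fun hq => hmb2ne (g.toE.injective hq).symm
        refine aut_eq_of_branch_agree hconn hleaf ha3' ?_ ?_
        · intro v hv
          rcases hbr v hv with rfl | rfl
          · rw [hfa, hga]
          · rw [hfb, hgb]
        · intro e v hv hev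
          rcases hbr v hv with rfl | rfl
          · have hem : e ∈ G.Ie v := mem_Ie.2 hev
            rw [hIaset] at hem
            simp only [Finset.mem_insert, Finset.mem_singleton] at hem
            rcases hem with rfl | rfl | rfl
            · exact h1
            · exact hqaE
            · exact hraE
          · have hem : e ∈ G.Ie v := mem_Ie.2 hev
            rw [hIbset] at hem
            simp only [Finset.mem_insert, Finset.mem_singleton] at hem
            rcases hem with rfl | rfl | rfl
            · exact hrbE
            · exact hmb1E
            · exact hmb2E
      · have hfab : f.toV a = b := (hdich f).resolve_left hfa
        have hga : ¬ g.toV a = a := by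
          intro hga
          rcases himgB f a pa qa hfab hpaI hqaI hqp hcpq with h2 | h2 <;>
            rcases himgA g a pa qa hga hpaI hqaI hqp hcpq with h3 | h3
          · exact hd1 (h3.symm.trans (h1.symm.trans h2))
          · exact hd3 (h3.symm.trans (h1.symm.trans h2))
          · exact hd2 (h3.symm.trans (h1.symm.trans h2))
          · exact hd4 (h3.symm.trans (h1.symm.trans h2))
        have hgab : g.toV a = b := (hdich g).resolve_left hga
        have hfb : f.toV b = a := hVbb f hfab
        have hgb : g.toV b = a := hVbb g hgab
        have hqaE : f.toE qa = g.toE qa := by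
          refine forced_other (himgB f a qa pa hfab hqaI hpaI (fun hq => hqp hq.symm) hcpq.symm)
            (himgB g a qa pa hgab hqaI hpaI (fun hq => hqp hq.symm) hcpq.symm)
            (z := f.toE pa) (himgB f a pa qa hfab hpaI hqaI hqp hcpq) ?_ ?_
          · exact fun hq => hqp (f.toE.injective hq)
          · rw [h1]; exact fun hq => hqp (g.toE.injective hq)
        have hraE : f.toE ra = g.toE ra := by
          refine forced_other3 (hdisjB f a hfab ra hraI) (hdisjB g a hgab ra hraI)
            (z1 := f.toE pa) (z2 := f.toE qa) (hdisjB f a hfab pa hpaI)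
            (hdisjB f a hfab qa hqaI) ?_ ?_ ?_ ?_ ?_
          · exact fun hq => hqp (f.toE.injective hq).symm
          · exact fun hq => hra1 (f.toE.injective hq)
          · exact fun hq => hra2 (f.toE.injective hq)
          · rw [h1]; exact fun hq => hra1 (g.toE.injective hq)
          · rw [hqaE]; exact fun hq => hra2 (g.toE.injective hq)
        have hfm1 := himgA f b mb1 mb2 hfb hmb1I hmb2I hmb21 hc_mb
        have hgm1 := himgA g b mb1 mb2 hgb hmb1I hmb2I hmb21 hc_mb
        have hnm1 : ∀ (k : G.Aut), k.toE mb1 = pa ∨ k.toE mb1 = qa → ¬ k.toE mb1 = mb1 := by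
          intro k hk hq
          rcases hk with h2 | h2
          · exact hd1 (h2.symm.trans hq)
          · exact hd3 (h2.symm.trans hq)
        have hmb1E : f.toE mb1 = g.toE mb1 := by
          by_cases hc1 : f.toE mb1 = pa
          · rcases hbit.1 (Or.inr hc1) with h2 | h2
            · exact absurd h2 (hnm1 g hgm1)
            · rw [hc1, h2]
          · have hfm1' : f.toE mb1 = qa := by
              rcases hfm1 with h2 | h2
              · exact absurd h2 hc1
              · exact h2
            have hgc1 : ¬ g.toE mb1 = pa := by
              intro hgc
              rcases hbit.2 (Or.inr hgc) with h2 | h2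
              · exact hnm1 f hfm1 h2
              · exact hc1 h2
            have hgm1' : g.toE mb1 = qa := by
              rcases hgm1 with h2 | h2
              · exact absurd h2 hgc1
              · exact h2
            rw [hfm1', hgm1']
        have hmb2E : f.toE mb2 = g.toE mb2 := by
          refine forced_other
            (himgA f b mb2 mb1 hfb hmb2I hmb1I (fun hq => hmb21 hq.symm) hc_mb.symm)
            (himgA g b mb2 mb1 hgb hmb2I hmb1I (fun hq => hmb21 hq.symm) hc_mb.symm)
            (z := f.toE mb1) hfm1 ?_ ?_
          · exact fun hq => hmb21 (f.toE.injective hq)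
          · rw [hmb1E]; exact fun hq => hmb21 (g.toE.injective hq)
        have hrbE : f.toE rb = g.toE rb := by
          refine forced_other3 (hdisjA f b hfb rb hrbI) (hdisjA g b hgb rb hrbI)
            (z1 := f.toE mb1) (z2 := f.toE mb2) (hdisjA f b hfb mb1 hmb1I)
            (hdisjA f b hfb mb2 hmb2I) ?_ ?_ ?_ ?_ ?_
          · exact fun hq => hmb21 (f.toE.injective hq).symm
          · exact fun hq => hmb1ne (f.toE.injective hq).symm
          · exact fun hq => hmb2ne (f.toE.injective hq).symm
          · rw [hmb1E]; exact fun hq => hmb1ne (g.toE.injective hq).symm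
          · rw [hmb2E]; exact fun hq => hmb2ne (g.toE.injective hq).symm
        refine aut_eq_of_branch_agree hconn hleaf ha3' ?_ ?_
        · intro v hv
          rcases hbr v hv with rfl | rfl
          · rw [hfab, hgab]
          · rw [hfb, hgb]
        · intro e v hv hev
          rcases hbr v hv with rfl | rfl
          · have hem : e ∈ G.Ie v := mem_Ie.2 hev
            rw [hIaset] at hem
            simp only [Finset.mem_insert, Finset.mem_singleton] at hem
            rcases hem with rfl | rfl | rfl
            · exact h1
            · exact hqaE
            · exact hraE
          · have hem : e ∈ G.Ie v := mem_Ie.2 hev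
            rw [hIbset] at hem
            simp only [Finset.mem_insert, Finset.mem_singleton] at hem
            rcases hem with rfl | rfl | rfl
            · exact hrbE
            · exact hmb1E
            · exact hmb2E
    refine card_le_of_inj G 12 ?_ Φ hΦinj
    have c1 : ({mb1, mb2} : Finset E).card = 2 := by
      rw [Finset.card_insert_of_notMem
        (by simp only [Finset.mem_singleton]; exact fun h => hmb21 h.symm),
        Finset.card_singleton]
    have c2 : ({qa, mb1, mb2} : Finset E).card = 3 := by
      rw [Finset.card_insert_of_notMem
        (by simp only [Finset.mem_insert, Finset.mem_singleton]; push_neg; exact ⟨hd3, hd4⟩), c1]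
    have c3 : S4.card = 4 := by
      rw [hS4, Finset.card_insert_of_notMem
        (by simp only [Finset.mem_insert, Finset.mem_singleton]; push_neg
            exact ⟨fun h => hqp h.symm, hd1, hd2⟩), c2]
    rw [Fintype.card_prod, Fintype.card_bool, Fintype.card_coe, c3]
    omega
  · -- theta case
    push_neg at hD
    -- partner existence
    have hpart : ∀ x, x ∈ G.Ie a → ∃ z, z ∈ G.Ie b ∧ G.Chain x z := by
      intro x hx
      obtain ⟨p, hpPf, hpne⟩ := exists_second_pair hconn hleaf ha3' ha3' (mem_Ie.1 hx) (hLf x)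
      obtain ⟨hbp, hcp, hep⟩ := mem_Pf.1 hpPf
      rcases hbr p.1 hbp with h | h
      · exfalso
        have hp2 : p.2 ∈ G.Ie a := mem_Ie.2 (by rw [← h]; exact hep)
        have hpne2 : p.2 ≠ x := fun hq => hpne (by rw [← h, ← hq])
        exact hD x p.2 hx hp2 hpne2 hcp
      · exact ⟨p.2, mem_Ie.2 (by rw [← h]; exact hep), hcp⟩
    obtain ⟨edum, hedum⟩ := Finset.card_pos.1 (by omega : 0 < (G.Ie a).card)
    set PA : E → E := fun x =>
      if h : ∃ z, z ∈ G.Ie b ∧ G.Chain x z then Classical.choose h else edum with hPA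
    have hPAspec : ∀ x, x ∈ G.Ie a → PA x ∈ G.Ie b ∧ G.Chain x (PA x) := by
      intro x hx
      have h := hpart x hx
      rw [hPA]; simp only [dif_pos h]
      exact Classical.choose_spec h
    -- injectivity of the partner map
    have hPAinj : ∀ x1 x2, x1 ∈ G.Ie a → x2 ∈ G.Ie a → PA x1 = PA x2 → x1 = x2 := by
      intro x1 x2 hx1 hx2 heq
      by_contra hne
      obtain ⟨hz1, hc1⟩ := hPAspec x1 hx1
      obtain ⟨hz2, hc2⟩ := hPAspec x2 hx2
      have hpair : G.Pf x1 = {(a, x1), (b, PA x1)} :=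
        pf_eq_pair hconn hleaf ha3' (mem_Pf.2 ⟨ha3', Chain.refl _, mem_Ie.1 hx1⟩)
          (mem_Pf.2 ⟨hb3', hc1, mem_Ie.1 hz1⟩)
          (fun hq => hab (congrArg Prod.fst hq))
      have hmem : ((a, x2) : V × E) ∈ G.Pf x1 :=
        mem_Pf.2 ⟨ha3', hc1.trans (heq ▸ hc2.symm), mem_Ie.1 hx2⟩
      rw [hpair] at hmem
      simp only [Finset.mem_insert, Finset.mem_singleton, Prod.mk.injEq] at hmem
      rcases hmem with ⟨-, hq⟩ | ⟨hq, -⟩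
      · exact hne hq.symm
      · exact hab hq
    have hsurj : ∀ y ∈ G.Ie b, ∃ x, ∃ _ : x ∈ G.Ie a, y = PA x := by
      refine Finset.surj_on_of_inj_on_of_card_le (fun x _ => PA x)
        (fun x hx => (hPAspec x hx).1)
        (fun x1 x2 hx1 hx2 heq => hPAinj x1 x2 hx1 hx2 heq) (by omega)
    -- forcing on the b side
    have hforce_b : ∀ f g : G.Aut, f.toV a = g.toV a → f.toV b = g.toV b →
        (∀ x, x ∈ G.Ie a → f.toE x = g.toE x) → ∀ y, y ∈ G.Ie b → f.toE y = g.toE y := by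
      intro f g hva hvb hEa y hy
      obtain ⟨x, hx, hyPA⟩ := hsurj y hy
      obtain ⟨hz1, hc1⟩ := hPAspec x hx
      rw [← hyPA] at hz1 hc1
      have hfb : 3 ≤ G.degree (f.toV b) := f.branch_map hb3'
      have hfa : 3 ≤ G.degree (f.toV a) := f.branch_map ha3'
      have hfafb : f.toV a ≠ f.toV b := fun hq => hab (f.toV.injective hq)
      have hpair : G.Pf (f.toE x) = {(f.toV a, f.toE x), (f.toV b, f.toE y)} :=
        pf_eq_pair hconn hleaf ha3'
          (mem_Pf.2 ⟨hfa, Chain.refl _, f.mem_ends (mem_Ie.1 hx)⟩)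
          (mem_Pf.2 ⟨hfb, f.chain_map hc1, f.mem_ends (mem_Ie.1 hz1)⟩)
          (fun hq => hfafb (congrArg Prod.fst hq))
      have hmem : ((f.toV b, g.toE y) : V × E) ∈ G.Pf (f.toE x) := by
        refine mem_Pf.2 ⟨hfb, ?_, ?_⟩
        · rw [hEa x hx]; exact g.chain_map hc1
        · rw [hvb]; exact g.mem_ends (mem_Ie.1 hz1)
      rw [hpair] at hmem
      simp only [Finset.mem_insert, Finset.mem_singleton, Prod.mk.injEq] at hmem
      rcases hmem with ⟨hq, -⟩ | ⟨-, hq⟩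
      · exact absurd hq.symm hfafb
      · exact hq.symm
    -- the injection
    have hcards : Fintype.card ↥(G.Ie b) = Fintype.card ↥(G.Ie a) := by
      rw [Fintype.card_coe, Fintype.card_coe, hIa, hIb]
    have τ : ↥(G.Ie b) ≃ ↥(G.Ie a) := Fintype.equivOfCardEq hcards
    set Φ : G.Aut → Bool × (↥(G.Ie a) ↪ ↥(G.Ie a)) := fun f =>
      if h : f.toV a = a then
        (false, ⟨fun x => ⟨f.toE ↑x, hmem1 f h ↑x x.2⟩,
          fun x y hxy => Subtype.ext (f.toE.injective (congrArg Subtype.val hxy))⟩)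
      else
        (true, ⟨fun x => τ ⟨f.toE ↑x, hmem2 f ((hdich f).resolve_left h) ↑x x.2⟩,
          fun x y hxy => Subtype.ext (f.toE.injective
            (congrArg Subtype.val (τ.injective hxy)))⟩) with hΦ
    have hΦinj : Function.Injective Φ := by
      intro f g h
      have hbool := congrArg Prod.fst h
      have hemb := congrArg Prod.snd h
      by_cases hfa : f.toV a = a
      · have hga : g.toV a = a := by
          by_contra hga
          rw [hΦ] at hbool
          simp only [dif_pos hfa, dif_neg hga] at hbool
          exact Bool.noConfusion hbool
        rw [hΦ] at hemb
        simp only [dif_pos hfa, dif_pos hga] at hemb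
        have hEa : ∀ x, x ∈ G.Ie a → f.toE x = g.toE x := by
          intro x hx
          have := DFunLike.congr_fun hemb ⟨x, hx⟩
          exact congrArg Subtype.val this
        have hva : f.toV a = g.toV a := by rw [hfa, hga]
        have hvb : f.toV b = g.toV b := by rw [hVba f hfa, hVba g hga]
        refine aut_eq_of_branch_agree hconn hleaf ha3' ?_ ?_
        · intro v hv
          rcases hbr v hv with rfl | rfl
          · exact hva
          · exact hvb
        · intro e v hv hev
          rcases hbr v hv with rfl | rfl
          · exact hEa e (mem_Ie.2 hev)
          · exact hforce_b f g hva hvb hEa e (mem_Ie.2 hev)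
      · have hga : ¬ g.toV a = a := by
          intro hga
          rw [hΦ] at hbool
          simp only [dif_neg hfa, dif_pos hga] at hbool
          exact Bool.noConfusion hbool
        rw [hΦ] at hemb
        simp only [dif_neg hfa, dif_neg hga] at hemb
        have hEa : ∀ x, x ∈ G.Ie a → f.toE x = g.toE x := by
          intro x hx
          have h2 := DFunLike.congr_fun hemb ⟨x, hx⟩
          have h3 := τ.injective h2
          exact congrArg Subtype.val h3
        have hva : f.toV a = g.toV a := by
          rw [(hdich f).resolve_left hfa, (hdich g).resolve_left hga]
        have hvb : f.toV b = g.toV b := by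
          rw [hVbb f ((hdich f).resolve_left hfa), hVbb g ((hdich g).resolve_left hga)]
        refine aut_eq_of_branch_agree hconn hleaf ha3' ?_ ?_
        · intro v hv
          rcases hbr v hv with rfl | rfl
          · exact hva
          · exact hvb
        · intro e v hv hev
          rcases hbr v hv with rfl | rfl
          · exact hEa e (mem_Ie.2 hev)
          · exact hforce_b f g hva hvb hEa e (mem_Ie.2 hev)
    refine card_le_of_inj G 12 ?_ Φ hΦinj
    rw [Fintype.card_prod, Fintype.card_bool, Fintype.card_embedding_eq,
      Fintype.card_coe, hIa]
    norm_num

lemma case_two_10 (hconn : G.Connected) (hleaf : G.Leafless) {a b : V} (hab : a ≠ b) (ha3 : G.degree a = 3) (hb3 : G.degree b = 3)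
    (hbr : ∀ v, 3 ≤ G.degree v → v = a ∨ v = b)
    (hLa : (G.Le a).card = 1) (hLb : G.Le b = ∅) : Nat.card G.Aut ≤ 12 := by
  have ha3' : 3 ≤ G.degree a := by omega
  have hb3' : 3 ≤ G.degree b := by omega
  obtain ⟨la, hLaset⟩ := Finset.card_eq_one.1 hLa
  have hdega := G.degree_eq a
  have hdegb := G.degree_eq b
  have hIa : (G.Ie a).card = 2 := by rw [hLa] at hdega; omega
  have hIb : (G.Ie b).card = 3 := by rw [hLb] at hdegb; simp at hdegb; omega
  have hlaI : la ∈ G.Ie a := G.Le_subset_Ie a (by rw [hLaset]; simp)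
  obtain ⟨e1, he1la, hIaset⟩ := pair_of_mem hIa hlaI
  have hla_ends : G.ends la = s(a, a) := mem_Le.1 (by rw [hLaset]; simp)
  have he1_ends : a ∈ G.ends e1 := mem_Ie.1 (by rw [hIaset]; simp)
  -- all automorphisms fix a and b
  have hVa : ∀ f : G.Aut, f.toV a = a := by
    intro f
    rcases hbr _ (f.branch_map ha3') with h | h
    · exact h
    · exfalso
      have h1 : f.toE la ∈ G.Le (f.toV a) := mem_Le.2 (f.loop_map hla_ends)
      rw [h, hLb] at h1
      exact Finset.notMem_empty _ h1
  have hVb : ∀ f : G.Aut, f.toV b = b := by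
    intro f
    rcases hbr _ (f.branch_map hb3') with h | h
    · exact absurd (f.toV.injective (h.trans (hVa f).symm)) (fun hq => hab hq.symm)
    · exact h
  have hlafix : ∀ f : G.Aut, f.toE la = la := by
    intro f
    have h1 : f.toE la ∈ G.Le (f.toV a) := mem_Le.2 (f.loop_map hla_ends)
    rw [hVa f, hLaset] at h1
    simpa using h1
  have he1fix : ∀ f : G.Aut, f.toE e1 = e1 := by
    intro f
    have h1 : f.toE e1 ∈ G.Ie (f.toV a) := mem_Ie.2 (f.mem_ends he1_ends)
    rw [hVa f, hIaset] at h1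
    simp only [Finset.mem_insert, Finset.mem_singleton] at h1
    rcases h1 with h1 | h1
    · exact absurd (f.toE.injective (h1.trans (hlafix f).symm)) he1la
    · exact h1
  -- no branch loop in the class of e1
  have hnochain : ¬ G.Chain e1 la := by
    intro hc
    have hp2 : (a, e1) ∈ G.Pf la := mem_Pf.2 ⟨ha3', hc.symm, he1_ends⟩
    have := loop_class_pure hconn hleaf ha3' ha3' hla_ends (a, e1) hp2
    simp only [Prod.mk.injEq] at this
    exact he1la this.2
  have hLfe1 : G.Lf e1 = ∅ := by
    rw [Finset.eq_empty_iff_forall_notMem]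
    rintro ⟨v, x⟩ hp
    simp only [Lf, Finset.mem_filter, Finset.mem_univ, true_and] at hp
    obtain ⟨hbv, hcx, hex⟩ := hp
    rcases hbr v hbv with rfl | rfl
    · have hxla : x = la := by
        have h2 : x ∈ G.Le v := mem_Le.2 hex
        rw [hLaset] at h2
        simpa using h2
      rw [hxla] at hcx
      exact hnochain hcx
    · have h2 : x ∈ G.Le v := mem_Le.2 hex
      rw [hLb] at h2
      exact Finset.notMem_empty _ h2
  -- the bar partner at b
  obtain ⟨p, hpPf, hpne⟩ := exists_second_pair hconn hleaf ha3' ha3' he1_ends hLfe1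
  obtain ⟨hbp, hcp, hep⟩ := mem_Pf.1 hpPf
  have hpb : p.1 = b := by
    rcases hbr p.1 hbp with h | h
    · exfalso
      have hx2 : p.2 ∈ G.Ie a := mem_Ie.2 (by rw [← h]; exact hep)
      rw [hIaset] at hx2
      simp only [Finset.mem_insert, Finset.mem_singleton] at hx2
      rcases hx2 with rfl | rfl
      · exact hnochain hcp
      · exact hpne (by rw [← h])
    · exact h
  set eb1 := p.2 with heb1
  have hceb1 : G.Chain e1 eb1 := hcp
  have heb1_ends : b ∈ G.ends eb1 := by rw [← hpb]; exact hep
  have hPfe1 : G.Pf e1 = {(a, e1), (b, eb1)} := by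
    have hm1 : (a, e1) ∈ G.Pf e1 := mem_Pf.2 ⟨ha3', Chain.refl _, he1_ends⟩
    have hm2 : (b, eb1) ∈ G.Pf e1 := mem_Pf.2 ⟨hb3', hceb1, heb1_ends⟩
    exact pf_eq_pair hconn hleaf ha3' hm1 hm2
      (fun hq => hab (congrArg Prod.fst hq))
  obtain ⟨m1, m2, hm1ne, hm2ne, hm21, hIbset⟩ := triple_of_mem hIb (mem_Ie.2 heb1_ends)
  have heb1fix : ∀ f : G.Aut, f.toE eb1 = eb1 := by
    intro f
    have hc2 : G.Chain e1 (f.toE eb1) := by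
      have := f.chain_map hceb1
      rwa [he1fix f] at this
    have hmem : (b, f.toE eb1) ∈ G.Pf e1 := by
      refine mem_Pf.2 ⟨hb3', hc2, ?_⟩
      have := f.mem_ends heb1_ends
      rwa [hVb f] at this
    rw [hPfe1] at hmem
    simp only [Finset.mem_insert, Finset.mem_singleton, Prod.mk.injEq] at hmem
    rcases hmem with ⟨hq, -⟩ | ⟨-, hq⟩
    · exact absurd hq.symm hab
    · exact hq
  have hIbmem : ∀ (f : G.Aut) (x : E), x ∈ G.Ie b → f.toE x ∈ G.Ie b := by
    intro f x hx
    have h := f.mem_ends (mem_Ie.1 hx)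
    rw [hVb f] at h
    exact mem_Ie.2 h
  have hdisj : ∀ (f : G.Aut) (x : E), x ∈ G.Ie b →
      f.toE x = eb1 ∨ f.toE x = m1 ∨ f.toE x = m2 := by
    intro f x hx
    have := hIbmem f x hx
    rw [hIbset] at this
    simpa using this
  have hm1I : m1 ∈ G.Ie b := by rw [hIbset]; simp
  have hm2I : m2 ∈ G.Ie b := by rw [hIbset]; simp
  have heb1I : eb1 ∈ G.Ie b := mem_Ie.2 heb1_ends
  set Φ : G.Aut → ↥(G.Ie b) := fun f => ⟨f.toE m1, hIbmem f m1 hm1I⟩ with hΦ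
  have hΦinj : Function.Injective Φ := by
    intro f g h
    have h1 : f.toE m1 = g.toE m1 := by simpa [hΦ, Subtype.ext_iff] using h
    have h2 : f.toE m2 = g.toE m2 := by
      refine forced_other3 (hdisj f m2 hm2I) (hdisj g m2 hm2I)
        (z1 := f.toE eb1) (z2 := f.toE m1) (hdisj f eb1 heb1I) (hdisj f m1 hm1I) ?_ ?_ ?_ ?_ ?_
      · exact fun hq => hm1ne (f.toE.injective hq).symm
      · exact fun hq => hm2ne (f.toE.injective hq)
      · exact fun hq => hm21 (f.toE.injective hq)
      · rw [heb1fix f, ← heb1fix g]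
        exact fun hq => hm2ne (g.toE.injective hq)
      · rw [h1]
        exact fun hq => hm21 (g.toE.injective hq)
    refine aut_eq_of_branch_agree hconn hleaf ha3' ?_ ?_
    · intro v hv
      rcases hbr v hv with rfl | rfl
      · rw [hVa f, hVa g]
      · rw [hVb f, hVb g]
    · intro e v hv hev
      rcases hbr v hv with rfl | rfl
      · have hem : e ∈ G.Ie v := mem_Ie.2 hev
        rw [hIaset] at hem
        simp only [Finset.mem_insert, Finset.mem_singleton] at hem
        rcases hem with rfl | rfl
        · rw [hlafix f, hlafix g]
        · rw [he1fix f, he1fix g]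
      · have hem : e ∈ G.Ie v := mem_Ie.2 hev
        rw [hIbset] at hem
        simp only [Finset.mem_insert, Finset.mem_singleton] at hem
        rcases hem with rfl | rfl | rfl
        · rw [heb1fix f, heb1fix g]
        · exact h1
        · exact h2
  refine card_le_of_inj G 12 ?_ Φ hΦinj
  rw [Fintype.card_coe, hIb]
  omega

lemma case_two_11 (hconn : G.Connected) (hleaf : G.Leafless) {a b : V} (hab : a ≠ b) (ha3 : G.degree a = 3) (hb3 : G.degree b = 3)
    (hbr : ∀ v, 3 ≤ G.degree v → v = a ∨ v = b)
    (hLa : (G.Le a).card = 1) (hLb : (G.Le b).card = 1) : Nat.card G.Aut ≤ 12 := by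
  have ha3' : 3 ≤ G.degree a := by omega
  have hb3' : 3 ≤ G.degree b := by omega
  obtain ⟨la, hLaset⟩ := Finset.card_eq_one.1 hLa
  obtain ⟨lb, hLbset⟩ := Finset.card_eq_one.1 hLb
  have hdega := G.degree_eq a
  have hdegb := G.degree_eq b
  have hIa : (G.Ie a).card = 2 := by omega
  have hIb : (G.Ie b).card = 2 := by omega
  have hlaI : la ∈ G.Ie a := G.Le_subset_Ie a (by rw [hLaset]; simp)
  have hlbI : lb ∈ G.Ie b := G.Le_subset_Ie b (by rw [hLbset]; simp)
  obtain ⟨ea, heala, hIaset⟩ := pair_of_mem hIa hlaI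
  obtain ⟨eb, heblb, hIbset⟩ := pair_of_mem hIb hlbI
  -- vertex dichotomy and agreement
  have hdich : ∀ f : G.Aut, f.toV a = a ∨ f.toV a = b :=
    fun f => hbr _ (f.branch_map ha3')
  have hVb : ∀ f : G.Aut, f.toV a = a → f.toV b = b := by
    intro f h
    rcases hbr _ (f.branch_map hb3') with h' | h'
    · exact absurd (f.toV.injective (h'.trans h.symm)) (fun hq => hab hq.symm)
    · exact h'
  have hVb' : ∀ f : G.Aut, f.toV a = b → f.toV b = a := by
    intro f h
    rcases hbr _ (f.branch_map hb3') with h' | h'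
    · exact h'
    · exact absurd (f.toV.injective (h'.trans h.symm)) (fun hq => hab hq.symm)
  -- forcing of edges
  have hforce : ∀ f g : G.Aut, f.toV a = g.toV a →
      ∀ (u : V) (lu eu : E), 3 ≤ G.degree u → G.Le u = {lu} → G.Ie u = {lu, eu} →
      eu ≠ lu → f.toE lu = g.toE lu ∧ f.toE eu = g.toE eu := by
    intro f g hfg u lu eu hu hLu hIu hnelu
    have hVu : f.toV u = g.toV u := by
      rcases hbr u hu with rfl | rfl
      · exact hfg
      · rcases hdich f with h | h
        · rw [hVb f h, hVb g (by rw [← hfg]; exact h)]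
        · rw [hVb' f h, hVb' g (by rw [← hfg]; exact h)]
    have hlu_ends : G.ends lu = s(u, u) := mem_Le.1 (by rw [hLu]; simp)
    have heu_ends : u ∈ G.ends eu := mem_Ie.1 (by rw [hIu]; simp)
    have himg : ∀ k : G.Aut, k.toV u = a ∨ k.toV u = b :=
      fun k => hbr _ (k.branch_map hu)
    -- loop forced
    have hlf : ∀ k : G.Aut, k.toV u = f.toV u → k.toE lu = (if f.toV u = a then la else lb) := by
      intro k hk
      have h1 : k.toE lu ∈ G.Le (k.toV u) := mem_Le.2 (k.loop_map hlu_ends)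
      rcases himg f with h | h
      · rw [hk, h, hLaset] at h1
        rw [h, if_pos rfl]
        simpa using h1
      · rw [hk, h, hLbset] at h1
        rw [h, if_neg (fun hq => hab hq.symm : ¬ (b = a))]
        simpa using h1
    have hloop : f.toE lu = g.toE lu := by
      rw [hlf f rfl, hlf g hVu.symm]
    -- other edge forced
    have hef : ∀ k : G.Aut, k.toV u = f.toV u → k.toE eu = (if f.toV u = a then ea else eb) := by
      intro k hk
      have h1 : k.toE eu ∈ G.Ie (k.toV u) := mem_Ie.2 (k.mem_ends heu_ends)
      have h2 : k.toE eu ≠ k.toE lu := fun hq => hnelu (k.toE.injective hq)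
      rcases himg f with h | h
      · rw [hk, h, hIaset] at h1
        rw [hlf k hk, h, if_pos rfl] at h2
        rw [h, if_pos rfl]
        simp only [Finset.mem_insert, Finset.mem_singleton] at h1
        rcases h1 with h1 | h1
        · exact absurd h1 h2
        · exact h1
      · have hne : ¬ (b = a) := fun hq => hab hq.symm
        rw [hk, h, hIbset] at h1
        rw [hlf k hk, h, if_neg hne] at h2
        rw [h, if_neg hne]
        simp only [Finset.mem_insert, Finset.mem_singleton] at h1
        rcases h1 with h1 | h1
        · exact absurd h1 h2
        · exact h1
    have hedge : f.toE eu = g.toE eu := by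
      rw [hef f rfl, hef g hVu.symm]
    exact ⟨hloop, hedge⟩
  -- injection into Bool
  have key : ∀ f g : G.Aut, f.toV a = g.toV a → f = g := by
    intro f g hfg
    refine aut_eq_of_branch_agree hconn hleaf ha3' ?_ ?_
    · intro v hv
      rcases hbr v hv with rfl | rfl
      · exact hfg
      · rcases hdich f with h | h
        · rw [hVb f h, hVb g (by rw [← hfg]; exact h)]
        · rw [hVb' f h, hVb' g (by rw [← hfg]; exact h)]
    · intro e v hv hev
      obtain ⟨h1, h2⟩ := hforce f g hfg a la ea ha3' hLaset hIaset heala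
      obtain ⟨h3, h4⟩ := hforce f g hfg b lb eb hb3' hLbset hIbset heblb
      rcases hbr v hv with rfl | rfl
      · have hem : e ∈ G.Ie v := mem_Ie.2 hev
        rw [hIaset] at hem
        simp only [Finset.mem_insert, Finset.mem_singleton] at hem
        rcases hem with rfl | rfl
        · exact h1
        · exact h2
      · have hem : e ∈ G.Ie v := mem_Ie.2 hev
        rw [hIbset] at hem
        simp only [Finset.mem_insert, Finset.mem_singleton] at hem
        rcases hem with rfl | rfl
        · exact h3
        · exact h4
  set Φ : G.Aut → Bool := fun f => decide (f.toV a = b) with hΦ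
  have hΦinj : Function.Injective Φ := by
    intro f g h
    simp only [hΦ, decide_eq_decide] at h
    apply key
    rcases hdich f with h1 | h1 <;> rcases hdich g with h2 | h2
    · rw [h1, h2]
    · exact absurd (h1.symm.trans (h.2 h2)) hab
    · exact absurd (h2.symm.trans (h.1 h1)) hab
    · rw [h1, h2]
  exact card_le_of_inj G 12 (by simp) Φ hΦinj

lemma case_two (hconn : G.Connected) (hleaf : G.Leafless) {a b : V} (hab : a ≠ b) (ha3 : G.degree a = 3) (hb3 : G.degree b = 3)
    (hbr : ∀ v, 3 ≤ G.degree v → v = a ∨ v = b) : Nat.card G.Aut ≤ 12 := by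
  have hdega := G.degree_eq a
  have hdegb := G.degree_eq b
  have hla : (G.Le a).card ≤ 1 := by
    have := Finset.card_le_card (G.Le_subset_Ie a); omega
  have hlb : (G.Le b).card ≤ 1 := by
    have := Finset.card_le_card (G.Le_subset_Ie b); omega
  by_cases ha0 : (G.Le a).card = 0 <;> by_cases hb0 : (G.Le b).card = 0
  · exact case_two_00 G hconn hleaf hab ha3 hb3 hbr
      (Finset.card_eq_zero.1 ha0) (Finset.card_eq_zero.1 hb0)
  · exact case_two_10 G hconn hleaf hab.symm hb3 ha3
      (fun v hv => (hbr v hv).symm) (by omega) (Finset.card_eq_zero.1 ha0)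
  · exact case_two_10 G hconn hleaf hab ha3 hb3 hbr (by omega) (Finset.card_eq_zero.1 hb0)
  · exact case_two_11 G hconn hleaf hab ha3 hb3 hbr (by omega) (by omega)

lemma case_one_0 (hconn : G.Connected) (hleaf : G.Leafless) {w : V} (hw4 : G.degree w = 4) (hbr : ∀ v, 3 ≤ G.degree v → v = w)
    (hLw : G.Le w = ∅) : Nat.card G.Aut ≤ 12 := by
  have hw3 : 3 ≤ G.degree w := by omega
  have hdeg := G.degree_eq w
  have hIw : (G.Ie w).card = 4 := by rw [hLw] at hdeg; simp at hdeg; omega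
  have hVw : ∀ f : G.Aut, f.toV w = w := fun f => hbr _ (f.branch_map hw3)
  have hImem : ∀ (f : G.Aut) (x : E), x ∈ G.Ie w → f.toE x ∈ G.Ie w := by
    intro f x hx
    have h := f.mem_ends (mem_Ie.1 hx)
    rw [hVw f] at h
    exact mem_Ie.2 h
  have hLf : ∀ x : E, G.Lf x = ∅ := by
    intro x
    rw [Finset.eq_empty_iff_forall_notMem]
    rintro ⟨v, y⟩ hp
    simp only [Lf, Finset.mem_filter, Finset.mem_univ, true_and] at hp
    obtain ⟨hbv, hcy, hey⟩ := hp
    rw [hbr v hbv] at hey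
    have h2 : y ∈ G.Le w := mem_Le.2 hey
    rw [hLw] at h2
    exact Finset.notMem_empty _ h2
  -- partner existence
  have hpart : ∀ x, x ∈ G.Ie w → ∃ z, z ∈ G.Ie w ∧ z ≠ x ∧ G.Chain x z := by
    intro x hx
    obtain ⟨p, hpPf, hpne⟩ := exists_second_pair hconn hleaf hw3 hw3 (mem_Ie.1 hx) (hLf x)
    obtain ⟨hbp, hcp, hep⟩ := mem_Pf.1 hpPf
    have hp1 : p.1 = w := hbr _ hbp
    refine ⟨p.2, mem_Ie.2 (by rw [← hp1]; exact hep), ?_, hcp⟩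
    intro hq
    exact hpne (by rw [← hp1, ← hq])
  have huniq : ∀ x y z, x ∈ G.Ie w → y ∈ G.Ie w → y ≠ x → G.Chain x y →
      z ∈ G.Ie w → z ≠ x → G.Chain x z → z = y := by
    intro x y z hx hy hyx hcy hz hzx hcz
    have hpair : G.Pf x = {(w, x), (w, y)} :=
      pf_eq_pair hconn hleaf hw3 (mem_Pf.2 ⟨hw3, Chain.refl _, mem_Ie.1 hx⟩)
        (mem_Pf.2 ⟨hw3, hcy, mem_Ie.1 hy⟩)
        (fun hq => hyx (congrArg Prod.snd hq).symm)
    have hmem : ((w, z) : V × E) ∈ G.Pf x := mem_Pf.2 ⟨hw3, hcz, mem_Ie.1 hz⟩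
    rw [hpair] at hmem
    simp only [Finset.mem_insert, Finset.mem_singleton, Prod.mk.injEq] at hmem
    rcases hmem with ⟨-, hq⟩ | ⟨-, hq⟩
    · exact absurd hq hzx
    · exact hq
  -- partner function
  obtain ⟨edum, hedum⟩ := Finset.card_pos.1 (by omega : 0 < (G.Ie w).card)
  set PT : E → E := fun y =>
    if h : ∃ z, z ∈ G.Ie w ∧ z ≠ y ∧ G.Chain y z then Classical.choose h else edum with hPT
  have hPTspec : ∀ y, y ∈ G.Ie w → PT y ∈ G.Ie w ∧ PT y ≠ y ∧ G.Chain y (PT y) := by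
    intro y hy
    have h := hpart y hy
    rw [hPT]; simp only [dif_pos h]
    exact Classical.choose_spec h
  have hPTuniq : ∀ y z, y ∈ G.Ie w → z ∈ G.Ie w → z ≠ y → G.Chain y z → z = PT y := by
    intro y z hy hz hzy hcz
    obtain ⟨h1, h2, h3⟩ := hPTspec y hy
    exact huniq y (PT y) z hy h1 h2 h3 hz hzy hcz
  set Q : E → E := fun y =>
    if h : ∃ z, z ∈ G.Ie w ∧ z ≠ y ∧ z ≠ PT y then Classical.choose h else edum with hQ
  have hQspec : ∀ y, y ∈ G.Ie w → Q y ∈ G.Ie w ∧ Q y ≠ y ∧ Q y ≠ PT y := by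
    intro y hy
    have hsub : ({y, PT y} : Finset E) ⊆ G.Ie w := by
      intro t ht
      rcases Finset.mem_insert.1 ht with rfl | ht'
      · exact hy
      · rw [Finset.mem_singleton.1 ht']; exact (hPTspec y hy).1
    have hc2 : ({y, PT y} : Finset E).card = 2 := by
      rw [Finset.card_insert_of_notMem
        (by simp only [Finset.mem_singleton]; exact fun h => (hPTspec y hy).2.1 h.symm),
        Finset.card_singleton]
    have hcs : (G.Ie w \ {y, PT y}).card = 2 := by
      rw [Finset.card_sdiff_of_subset hsub, hc2, hIw]
    obtain ⟨z, hz⟩ := Finset.card_pos.1 (by omega : 0 < (G.Ie w \ {y, PT y}).card)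
    rw [Finset.mem_sdiff, Finset.mem_insert, Finset.mem_singleton] at hz
    push_neg at hz
    have h : ∃ z, z ∈ G.Ie w ∧ z ≠ y ∧ z ≠ PT y := ⟨z, hz.1, hz.2.1, hz.2.2⟩
    rw [hQ]; simp only [dif_pos h]
    exact Classical.choose_spec h
  -- fix the four edges
  obtain ⟨x1, hx1⟩ := Finset.card_pos.1 (by omega : 0 < (G.Ie w).card)
  obtain ⟨hx2I, hx21, hcx12⟩ := hPTspec x1 hx1
  set x2 := PT x1
  obtain ⟨x3, x4, hx31, hx32, hx41, hx42, hx43, hIset⟩ := quad_of_mem2 hIw hx1 hx2I hx21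
  -- transported partners
  have htrans : ∀ (f : G.Aut) (x y : E), x ∈ G.Ie w → y ∈ G.Ie w → y ≠ x → G.Chain x y →
      f.toE y = PT (f.toE x) := by
    intro f x y hx hy hyx hc
    exact hPTuniq (f.toE x) (f.toE y) (hImem f x hx) (hImem f y hy)
      (fun hq => hyx (f.toE.injective hq)) (f.chain_map hc)
  have hx3I : x3 ∈ G.Ie w := by rw [hIset]; simp
  have hx4I : x4 ∈ G.Ie w := by rw [hIset]; simp
  have hcx34 : G.Chain x3 x4 := by
    obtain ⟨hz1, hz2, hz3⟩ := hPTspec x3 hx3I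
    have : PT x3 = x4 := by
      rw [hIset] at hz1
      simp only [Finset.mem_insert, Finset.mem_singleton] at hz1
      rcases hz1 with hq | hq | hq | hq
      · exfalso
        have := huniq x1 x2 x3 hx1 hx2I hx21 hcx12 hx3I hx31
          (by rw [← hq]; exact hz3.symm)
        exact hx32 this
      · exfalso
        have := huniq x2 x1 x3 hx2I hx1 (fun h => hx21 h.symm) hcx12.symm hx3I hx32
          (by rw [← hq]; exact hz3.symm)
        exact hx31 this
      · exact absurd hq hz2
      · exact hq
    rw [← this]; exact hz3
  set Φ : G.Aut → ↥(G.Ie w) × Bool :=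
    fun f => (⟨f.toE x1, hImem f x1 hx1⟩, decide (f.toE x3 = Q (f.toE x1))) with hΦ
  have hΦinj : Function.Injective Φ := by
    intro f g h
    rw [hΦ, Prod.ext_iff, Subtype.ext_iff] at h
    obtain ⟨h1, hbit⟩ := h
    simp only at h1 hbit
    have h2 : f.toE x2 = g.toE x2 := by
      rw [htrans f x1 x2 hx1 hx2I hx21 hcx12, htrans g x1 x2 hx1 hx2I hx21 hcx12, h1]
    have h4' : f.toE x2 = PT (f.toE x1) := htrans f x1 x2 hx1 hx2I hx21 hcx12
    have h3 : f.toE x3 = g.toE x3 := by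
      have hfm : f.toE x3 ∈ G.Ie w \ ({f.toE x1, PT (f.toE x1)} : Finset E) := by
        rw [Finset.mem_sdiff, Finset.mem_insert, Finset.mem_singleton]
        refine ⟨hImem f x3 hx3I, ?_⟩
        push_neg
        constructor
        · exact fun hq => hx31 (f.toE.injective hq)
        · rw [← h4']; exact fun hq => hx32 (f.toE.injective hq)
      have hgm : g.toE x3 ∈ G.Ie w \ ({f.toE x1, PT (f.toE x1)} : Finset E) := by
        rw [Finset.mem_sdiff, Finset.mem_insert, Finset.mem_singleton]
        refine ⟨hImem g x3 hx3I, ?_⟩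
        push_neg
        constructor
        · rw [h1]; exact fun hq => hx31 (g.toE.injective hq)
        · rw [← h4', h2]; exact fun hq => hx32 (g.toE.injective hq)
      have hQm : Q (f.toE x1) ∈ G.Ie w \ ({f.toE x1, PT (f.toE x1)} : Finset E) := by
        obtain ⟨hq1, hq2, hq3⟩ := hQspec (f.toE x1) (hImem f x1 hx1)
        rw [Finset.mem_sdiff, Finset.mem_insert, Finset.mem_singleton]
        exact ⟨hq1, by push_neg; exact ⟨hq2, hq3⟩⟩
      have hsub : ({f.toE x1, PT (f.toE x1)} : Finset E) ⊆ G.Ie w := by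
        intro t ht
        rcases Finset.mem_insert.1 ht with rfl | ht'
        · exact hImem f x1 hx1
        · rw [Finset.mem_singleton.1 ht']
          exact (hPTspec (f.toE x1) (hImem f x1 hx1)).1
      have hc2 : ({f.toE x1, PT (f.toE x1)} : Finset E).card = 2 := by
        rw [Finset.card_insert_of_notMem
          (by simp only [Finset.mem_singleton]
              exact fun h => (hPTspec (f.toE x1) (hImem f x1 hx1)).2.1 h.symm),
          Finset.card_singleton]
      have hcs : (G.Ie w \ ({f.toE x1, PT (f.toE x1)} : Finset E)).card = 2 := by
        rw [Finset.card_sdiff_of_subset hsub, hc2, hIw]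
      obtain ⟨R, hRQ, hRset⟩ := pair_of_mem hcs hQm
      rw [hRset, Finset.mem_insert, Finset.mem_singleton] at hfm hgm
      rw [decide_eq_decide] at hbit
      by_cases hcase : f.toE x3 = Q (f.toE x1)
      · rw [hcase, hbit.1 hcase, h1]
      · have hgcase : ¬ g.toE x3 = Q (g.toE x1) := fun hq => hcase (hbit.2 hq)
        rw [← h1] at hgcase
        rcases hfm with hq | hq
        · exact absurd hq hcase
        · rcases hgm with hq' | hq'
          · exact absurd hq' hgcase
          · rw [hq, hq']
    have h4 : f.toE x4 = g.toE x4 := by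
      rw [htrans f x3 x4 hx3I hx4I hx43 hcx34, htrans g x3 x4 hx3I hx4I hx43 hcx34, h3]
    refine aut_eq_of_branch_agree hconn hleaf hw3 ?_ ?_
    · intro v hv
      rw [hbr v hv, hVw f, hVw g]
    · intro e v hv hev
      have hem : e ∈ G.Ie w := mem_Ie.2 (by rw [← hbr v hv]; exact hev)
      rw [hIset] at hem
      simp only [Finset.mem_insert, Finset.mem_singleton] at hem
      rcases hem with rfl | rfl | rfl | rfl
      · exact h1
      · exact h2
      · exact h3
      · exact h4
  refine card_le_of_inj G 12 ?_ Φ hΦinj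
  rw [Fintype.card_prod, Fintype.card_coe, hIw, Fintype.card_bool]
  omega

lemma case_one_1 (hconn : G.Connected) (hleaf : G.Leafless) {w : V} (hw4 : G.degree w = 4) (hbr : ∀ v, 3 ≤ G.degree v → v = w)
    (hLw : (G.Le w).card = 1) : Nat.card G.Aut ≤ 12 := by
  have hw3 : 3 ≤ G.degree w := by omega
  obtain ⟨l, hLset⟩ := Finset.card_eq_one.1 hLw
  have hdeg := G.degree_eq w
  have hIw : (G.Ie w).card = 3 := by omega
  have hlI : l ∈ G.Ie w := G.Le_subset_Ie w (by rw [hLset]; simp)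
  obtain ⟨x1, x2, hx1l, hx2l, hx21, hIset⟩ := triple_of_mem hIw hlI
  have hVw : ∀ f : G.Aut, f.toV w = w := fun f => hbr _ (f.branch_map hw3)
  have hLmem : ∀ (f : G.Aut) (x : E), x ∈ G.Le w → f.toE x ∈ G.Le w := by
    intro f x hx
    have h := f.loop_map (mem_Le.1 hx)
    rw [hVw f] at h
    exact mem_Le.2 h
  have hImem : ∀ (f : G.Aut) (x : E), x ∈ G.Ie w → f.toE x ∈ G.Ie w := by
    intro f x hx
    have h := f.mem_ends (mem_Ie.1 hx)
    rw [hVw f] at h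
    exact mem_Ie.2 h
  have hlfix : ∀ f : G.Aut, f.toE l = l := by
    intro f
    have := hLmem f l (by rw [hLset]; simp)
    rw [hLset] at this
    simpa using this
  have hx1I : x1 ∈ G.Ie w := by rw [hIset]; simp
  have hx2I : x2 ∈ G.Ie w := by rw [hIset]; simp
  have hdisj : ∀ (k : G.Aut) (x : E), x ∈ G.Ie w →
      k.toE x = l ∨ k.toE x = x1 ∨ k.toE x = x2 := by
    intro k x hx
    have := hImem k x hx
    rw [hIset] at this
    simpa using this
  set Φ : G.Aut → ↥(G.Ie w) := fun f => ⟨f.toE x1, hImem f x1 hx1I⟩ with hΦ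
  have hΦinj : Function.Injective Φ := by
    intro f g h
    have h1 : f.toE x1 = g.toE x1 := by simpa [hΦ, Subtype.ext_iff] using h
    have h2 : f.toE x2 = g.toE x2 := by
      refine forced_other3 (hdisj f x2 hx2I) (hdisj g x2 hx2I)
        (z1 := f.toE l) (z2 := f.toE x1) (hdisj f l hlI) (hdisj f x1 hx1I) ?_ ?_ ?_ ?_ ?_
      · exact fun hq => hx1l (f.toE.injective hq).symm
      · exact fun hq => hx2l (f.toE.injective hq)
      · exact fun hq => hx21 (f.toE.injective hq)
      · rw [hlfix f, ← hlfix g]; exact fun hq => hx2l (g.toE.injective hq)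
      · rw [h1]; exact fun hq => hx21 (g.toE.injective hq)
    refine aut_eq_of_branch_agree hconn hleaf hw3 ?_ ?_
    · intro v hv
      rw [hbr v hv, hVw f, hVw g]
    · intro e v hv hev
      have hem : e ∈ G.Ie w := mem_Ie.2 (by rw [← hbr v hv]; exact hev)
      rw [hIset] at hem
      simp only [Finset.mem_insert, Finset.mem_singleton] at hem
      rcases hem with rfl | rfl | rfl
      · rw [hlfix f, hlfix g]
      · exact h1
      · exact h2
  refine card_le_of_inj G 12 ?_ Φ hΦinj
  rw [Fintype.card_coe, hIw]
  omega

lemma case_one_2 (hconn : G.Connected) (hleaf : G.Leafless) {w : V} (hw4 : G.degree w = 4) (hbr : ∀ v, 3 ≤ G.degree v → v = w)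
    (hLw : (G.Le w).card = 2) : Nat.card G.Aut ≤ 12 := by
  have hw3 : 3 ≤ G.degree w := by omega
  obtain ⟨l1, l2, hl12, hLset⟩ := Finset.card_eq_two.1 hLw
  have hdeg := G.degree_eq w
  have hIw : (G.Ie w).card = 2 := by omega
  have hIeq : G.Ie w = G.Le w :=
    (Finset.eq_of_subset_of_card_le (G.Le_subset_Ie w) (by omega)).symm
  have hVw : ∀ f : G.Aut, f.toV w = w := fun f => hbr _ (f.branch_map hw3)
  have hLmem : ∀ (f : G.Aut) (x : E), x ∈ G.Le w → f.toE x ∈ G.Le w := by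
    intro f x hx
    have h := f.loop_map (mem_Le.1 hx)
    rw [hVw f] at h
    exact mem_Le.2 h
  have hl1m : l1 ∈ G.Le w := by rw [hLset]; simp
  have hl2m : l2 ∈ G.Le w := by rw [hLset]; simp
  set Φ : G.Aut → ↥(G.Le w) := fun f => ⟨f.toE l1, hLmem f l1 hl1m⟩ with hΦ
  have hΦinj : Function.Injective Φ := by
    intro f g h
    have h1 : f.toE l1 = g.toE l1 := by
      simpa [hΦ, Subtype.ext_iff] using h
    have hmemdisj : ∀ (k : G.Aut) (x : E), x ∈ G.Le w → k.toE x = l1 ∨ k.toE x = l2 := by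
      intro k x hx
      have := hLmem k x hx
      rw [hLset] at this
      simpa using this
    have h2 : f.toE l2 = g.toE l2 := by
      refine forced_other (hmemdisj f l2 hl2m) (hmemdisj g l2 hl2m)
        (z := f.toE l1) (hmemdisj f l1 hl1m) ?_ ?_
      · exact fun hq => hl12 (f.toE.injective hq).symm
      · rw [h1]; exact fun hq => hl12 (g.toE.injective hq).symm
    refine aut_eq_of_branch_agree hconn hleaf hw3 ?_ ?_
    · intro v hv
      rw [hbr v hv, hVw f, hVw g]
    · intro e v hv hev
      have hem : e ∈ G.Le w := by
        rw [← hIeq]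
        exact mem_Ie.2 (by rw [← hbr v hv]; exact hev)
      rw [hLset] at hem
      rcases Finset.mem_insert.1 hem with rfl | hem'
      · exact h1
      · rw [Finset.mem_singleton.1 hem']; exact h2
  refine card_le_of_inj G 12 ?_ Φ hΦinj
  rw [Fintype.card_coe, hLw]
  omega

lemma case_one (hconn : G.Connected) (hleaf : G.Leafless) {w : V} (hw4 : G.degree w = 4) (hbr : ∀ v, 3 ≤ G.degree v → v = w) :
    Nat.card G.Aut ≤ 12 := by
  have hdegw := G.degree_eq w
  have hlw : (G.Le w).card ≤ 2 := by
    have := Finset.card_le_card (G.Le_subset_Ie w); omega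
  by_cases h0 : (G.Le w).card = 0
  · exact case_one_0 G hconn hleaf hw4 hbr (Finset.card_eq_zero.1 h0)
  · by_cases h1 : (G.Le w).card = 1
    · exact case_one_1 G hconn hleaf hw4 hbr h1
    · exact case_one_2 G hconn hleaf hw4 hbr (by omega)

end Cases

theorem main_bound (G : Multigraph V E) (hconn : G.Connected) (hleaf : G.Leafless)
    (hbetti : Fintype.card E + 1 = Fintype.card V + 2) :
    Nat.card G.Aut ≤ 12 := by
  rcases branch_split G hleaf hbetti with ⟨w, hw4, hbr⟩ | ⟨a, b, hab, ha3, hb3, hbr⟩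
  · exact case_one G hconn hleaf hw4 hbr
  · exact case_two G hconn hleaf hab ha3 hb3 hbr

end Fin

end Multigraph

/-- A connected leafless graph of Betti number `2` has at most
`12` automorphisms.  (The Betti number of a connected graph is `#E - #V + 1`,
expressed here additively as `#E + 1 = #V + 2`.) -/
theorem aut_card_le_of_betti_eq_two {V E : Type} [Fintype V] [Fintype E]
    (G : Multigraph V E)
    (hconn : G.Connected) (hleaf : G.Leafless)
    (hbetti : Fintype.card E + 1 = Fintype.card V + 2) :
    Nat.card G.Aut ≤ 12 :=
  Multigraph.main_bound G hconn hleaf hbetti
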